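/- Let k be a positive integer and Λ a finitely aligned k-graph with boundary-path groupoid G_Λ, endowed with the topology generated by the sets Z(λ *_s μ \ G). Then Λ is cofinal if and only if G_Λ is minimal, i.e. the unit space G_Λ^(0) has no open invariant subsets other than ∅ and G_Λ^(0); equivalently, for each x ∈ G_Λ^(0) the orbit [x] := s(xG_Λ) is dense in G_Λ^(0). -/

import Mathlib

/-- A higher-rank graph (`k`-graph): a countable small category together with a degree
functor `d` into `ℕᵏ` satisfying the unique factorisation property.  The morphisms form the
type `Path`; the objects (vertices) are identified with the identity paths via `vertex`.
Composition `comp p q` is only meaningful when `src p = rng q`; all axioms are stated under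
this compatibility assumption. -/
structure KGraph (k : ℕ) where
  Obj : Type
  Path : Type
  countable_obj : Countable Obj
  countable_path : Countable Path
  src : Path → Obj
  rng : Path → Obj
  vertex : Obj → Path
  comp : Path → Path → Path
  deg : Path → Fin k → ℕ
  src_vertex : ∀ v, src (vertex v) = v
  rng_vertex : ∀ v, rng (vertex v) = v
  deg_vertex : ∀ v, deg (vertex v) = 0
  vertex_comp : ∀ p, comp (vertex (rng p)) p = p
  comp_vertex : ∀ p, comp p (vertex (src p)) = p
  src_comp : ∀ p q, src p = rng q → src (comp p q) = src q
  rng_comp : ∀ p q, src p = rng q → rng (comp p q) = rng p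
  deg_comp : ∀ p q, src p = rng q → deg (comp p q) = deg p + deg q
  comp_assoc : ∀ p q r, src p = rng q → src q = rng r →
    comp (comp p q) r = comp p (comp q r)
  factorisation : ∀ (p : Path) (m n : Fin k → ℕ), deg p = m + n →
    ∃! x : Path × Path, src x.1 = rng x.2 ∧ deg x.1 = m ∧ deg x.2 = n ∧
      comp x.1 x.2 = p

namespace KGraph

variable {k : ℕ} (Λ : KGraph k)

/-- `Λ^min(p,q)`: the pairs `(ρ,τ)` with `pρ = qτ` a minimal common extension of `p` and `q`. -/
def minPairs (p q : Λ.Path) : Set (Λ.Path × Λ.Path) :=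
  {x | Λ.src p = Λ.rng x.1 ∧ Λ.src q = Λ.rng x.2 ∧
    Λ.comp p x.1 = Λ.comp q x.2 ∧
    Λ.deg (Λ.comp p x.1) = Λ.deg p ⊔ Λ.deg q}

/-- `MCE(p,q)`: minimal common extensions of `p` and `q`. -/
def MCE (p q : Λ.Path) : Set Λ.Path :=
  {t | Λ.deg t = Λ.deg p ⊔ Λ.deg q ∧
    (∃ r, Λ.src p = Λ.rng r ∧ Λ.comp p r = t) ∧
    (∃ r, Λ.src q = Λ.rng r ∧ Λ.comp q r = t)}

/-- `Λ` is finitely aligned if all the sets `Λ^min(p,q)` are finite. -/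
def FinitelyAligned : Prop := ∀ p q, (Λ.minPairs p q).Finite

/-- `E ⊆ vΛ` is exhaustive. -/
def Exhaustive (v : Λ.Obj) (E : Set Λ.Path) : Prop :=
  ∀ p, Λ.rng p = v → ∃ q ∈ E, (Λ.minPairs p q).Nonempty

/-- `E` is a finite exhaustive subset of `vΛ \ {v}`, i.e. an element of `FE(Λ)`
with range vertex `v`. -/
def FE (v : Λ.Obj) (E : Set Λ.Path) : Prop :=
  E.Finite ∧ (∀ p ∈ E, Λ.rng p = v ∧ p ≠ Λ.vertex v) ∧ Λ.Exhaustive v E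

/-- `Ext(p; E)`. -/
def extSet (p : Λ.Path) (E : Set Λ.Path) : Set Λ.Path :=
  ⋃ q ∈ E, {r | ∃ t, (r, t) ∈ Λ.minPairs p q}

section Family

variable {A : Type} [NonUnitalRing A]

/-- (KP1): the vertex elements are mutually orthogonal idempotents. -/
def KP1 (S : Λ.Path → A) : Prop :=
  (∀ v, S (Λ.vertex v) * S (Λ.vertex v) = S (Λ.vertex v)) ∧
  ∀ v w, v ≠ w → S (Λ.vertex v) * S (Λ.vertex w) = 0

/-- (KP2): multiplicativity on composable paths and ghost paths.  Here `T μ` plays the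
role of `S_{μ*}`. -/
def KP2 (S T : Λ.Path → A) : Prop :=
  ∀ p q, Λ.src p = Λ.rng q →
    S p * S q = S (Λ.comp p q) ∧ T q * T p = T (Λ.comp p q)

/-- (KP3): `S_{p*} S_q = ∑_{(ρ,τ) ∈ Λ^min(p,q)} S_ρ S_{τ*}` (empty sum read as `0`). -/
def KP3 (S T : Λ.Path → A) : Prop :=
  ∀ p q, T p * S q = ∑ᶠ x ∈ Λ.minPairs p q, S x.1 * T x.2

/-- (KP4): `∏_{p ∈ E} (S_v - S_p S_{p*}) = 0` for every finite exhaustive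
`E ⊆ vΛ \ {v}`.  The product is implemented as a fold over any duplicate-free list
enumerating `E`, with the harmless extra idempotent factor `S_v` in front. -/
def KP4 (S T : Λ.Path → A) : Prop :=
  ∀ (v : Λ.Obj) (l : List Λ.Path), l.Nodup → Λ.FE v {p | p ∈ l} →
    (l.map fun p => S (Λ.vertex v) - S p * T p).foldl (· * ·) (S (Λ.vertex v)) = 0

/-- A Kumjian–Pask `Λ`-family in a (not necessarily unital) ring: `S p` represents `s_p`
and `T p` represents the ghost element `s_{p*}`, with `T` and `S` agreeing on vertices. -/
def IsKPFamily (S T : Λ.Path → A) : Prop :=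
  (∀ v, T (Λ.vertex v) = S (Λ.vertex v)) ∧
  Λ.KP1 S ∧ Λ.KP2 S T ∧ Λ.KP3 S T ∧ Λ.KP4 S T

end Family

/-- `(B, s, t)` is *the* (universal) Kumjian–Pask algebra of `Λ` over `R`:
`(s, t)` is a Kumjian–Pask `Λ`-family generating `B`, and every Kumjian–Pask `Λ`-family
in an `R`-algebra `A` factors uniquely through it. -/
def IsUniversalKP (R : Type) [CommRing R] (B : Type) [NonUnitalRing B]
    [Module R B] [SMulCommClass R B B] [IsScalarTower R B B]
    (s t : Λ.Path → B) : Prop :=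
  Λ.IsKPFamily s t ∧
  NonUnitalAlgebra.adjoin R (Set.range s ∪ Set.range t) = ⊤ ∧
  ∀ (A : Type) [NonUnitalRing A] [Module R A] [SMulCommClass R A A]
    [IsScalarTower R A A] (S T : Λ.Path → A), Λ.IsKPFamily S T →
      ∃! π : B →ₙₐ[R] A, (∀ p, π (s p) = S p) ∧ (∀ p, π (t p) = T p)

/-- A boundary path of `Λ`: a degree-preserving functor `x : Ω_{k,m} → Λ`
(for `m = deg x ∈ (ℕ∪{∞})ᵏ`), recorded via its segments `seg p q = x(p,q)`
for `p ≤ q ≤ m` (the value of `seg` outside this domain is junk), and satisfying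
the boundary-path condition with respect to finite exhaustive sets. -/
structure BoundaryPath (Λ : KGraph k) where
  deg : Fin k → ℕ∞
  seg : (Fin k → ℕ) → (Fin k → ℕ) → Λ.Path
  deg_seg : ∀ p q, p ≤ q → (∀ i, (q i : ℕ∞) ≤ deg i) → Λ.deg (seg p q) = q - p
  seg_self : ∀ p, (∀ i, (p i : ℕ∞) ≤ deg i) →
    seg p p = Λ.vertex (Λ.src (seg p p))
  src_seg : ∀ p q r, p ≤ q → q ≤ r → (∀ i, (r i : ℕ∞) ≤ deg i) →
    Λ.src (seg p q) = Λ.rng (seg q r)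
  comp_seg : ∀ p q r, p ≤ q → q ≤ r → (∀ i, (r i : ℕ∞) ≤ deg i) →
    Λ.comp (seg p q) (seg q r) = seg p r
  boundary : ∀ n : Fin k → ℕ, (∀ i, (n i : ℕ∞) ≤ deg i) →
    ∀ E : Set Λ.Path, Λ.FE (Λ.src (seg n n)) E →
      ∃ p ∈ E, (∀ i, ((n + Λ.deg p) i : ℕ∞) ≤ deg i) ∧ seg n (n + Λ.deg p) = p

namespace BoundaryPath

variable {Λ : KGraph k}

/-- The vertex `x(n)` of a boundary path. -/
def vtx (x : Λ.BoundaryPath) (n : Fin k → ℕ) : Λ.Obj := Λ.src (x.seg n n)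

/-- The range `r(x) = x(0)` of a boundary path. -/
def rng (x : Λ.BoundaryPath) : Λ.Obj := x.vtx 0

end BoundaryPath

/-- `IsShift n x y` says that `y = σⁿ x` is the shift of the boundary path `x` by
`n ≤ d(x)`. -/
def IsShift (n : Fin k → ℕ) (x y : Λ.BoundaryPath) : Prop :=
  (∀ i, (n i : ℕ∞) ≤ x.deg i) ∧
  (∀ i, y.deg i = x.deg i - (n i : ℕ∞)) ∧
  ∀ p q, p ≤ q → (∀ i, (q i : ℕ∞) ≤ y.deg i) → y.seg p q = x.seg (n + p) (n + q)

/-- `IsConcat p x y` says that `y = p·x` is the concatenation of the path `p` with the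
boundary path `x` (so `y(0, d p) = p` and `σ^{d p} y = x`). -/
def IsConcat (p : Λ.Path) (x y : Λ.BoundaryPath) : Prop :=
  Λ.IsShift (Λ.deg p) y x ∧ y.seg 0 (Λ.deg p) = p

/-- A boundary path `x` is aperiodic if distinct paths with source `r(x)` give distinct
concatenations `p·x ≠ q·x`. -/
def AperiodicBP (x : Λ.BoundaryPath) : Prop :=
  ∀ p q, Λ.src p = x.rng → Λ.src q = x.rng → p ≠ q →
    ∀ y, Λ.IsConcat p x y → ¬Λ.IsConcat q x y

/-- `Λ` is aperiodic: every vertex receives an aperiodic boundary path. -/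
def Aperiodic : Prop :=
  ∀ v : Λ.Obj, ∃ x : Λ.BoundaryPath, x.rng = v ∧ Λ.AperiodicBP x

/-- `Λ` is cofinal: for every vertex `v` and boundary path `x` there is `n ≤ d(x)`
with `vΛx(n) ≠ ∅`. -/
def Cofinal : Prop :=
  ∀ (v : Λ.Obj) (x : Λ.BoundaryPath), ∃ n : Fin k → ℕ,
    (∀ i, (n i : ℕ∞) ≤ x.deg i) ∧ ∃ p, Λ.rng p = v ∧ Λ.src p = x.vtx n

/-- The boundary-path groupoid `G_Λ` as a set of triples `(x, m, y)` with
`σᵖ x = σ^q y` and `m = p - q`. -/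
def BPG : Set (Λ.BoundaryPath × (Fin k → ℤ) × Λ.BoundaryPath) :=
  {a | ∃ (p q : Fin k → ℕ) (z : Λ.BoundaryPath),
    (fun i => (p i : ℤ) - (q i : ℤ)) = a.2.1 ∧
    Λ.IsShift p a.1 z ∧ Λ.IsShift q a.2.2 z}

/-- `Z(p) = p ∂Λ`, the cylinder set of boundary paths with prefix `p`. -/
def ZC (p : Λ.Path) : Set Λ.BoundaryPath := {x | ∃ z, Λ.IsConcat p z x}

/-- `Z(p *ₛ q)`. -/
def ZP (p q : Λ.Path) : Set (Λ.BoundaryPath × (Fin k → ℤ) × Λ.BoundaryPath) :=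
  {a | a.2.1 = (fun i => (Λ.deg p i : ℤ) - (Λ.deg q i : ℤ)) ∧
    a.1 ∈ Λ.ZC p ∧ a.2.2 ∈ Λ.ZC q ∧
    ∃ z, Λ.IsShift (Λ.deg p) a.1 z ∧ Λ.IsShift (Λ.deg q) a.2.2 z}

/-- `Z(p *ₛ q \ G)`. -/
def ZPD (p q : Λ.Path) (G : Set Λ.Path) :
    Set (Λ.BoundaryPath × (Fin k → ℤ) × Λ.BoundaryPath) :=
  Λ.ZP p q \ ⋃ ν ∈ G, Λ.ZP (Λ.comp p ν) (Λ.comp q ν)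

/-- The boundary-path groupoid `G_Λ` as a type. -/
abbrev bpSpace : Type := {a // a ∈ Λ.BPG}

/-- The topology on `G_Λ` generated by the basic sets `Z(p *ₛ q \ G)` with `G` finite. -/
def bpTop : TopologicalSpace Λ.bpSpace :=
  TopologicalSpace.generateFrom
    {V | ∃ (p q : Λ.Path) (G : Set Λ.Path), Λ.src p = Λ.src q ∧
      (∀ ν ∈ G, Λ.rng ν = Λ.src p) ∧ G.Finite ∧
      V = Subtype.val ⁻¹' Λ.ZPD p q G}

theorem isShift_zero (x : Λ.BoundaryPath) : Λ.IsShift 0 x x :=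
  ⟨fun i => by simp, fun i => by simp, fun p q _ _ => by simp⟩

/-- The unit space `G_Λ^{(0)}` of the boundary-path groupoid. -/
def unitSet : Set Λ.bpSpace := {a | a.1.2.1 = 0 ∧ a.1.1 = a.1.2.2}

/-- The unit `(x, 0, x)` of `G_Λ` corresponding to a boundary path `x`. -/
def unitOf (x : Λ.BoundaryPath) : Λ.bpSpace :=
  ⟨(x, 0, x), ⟨0, 0, x, by funext i; simp, Λ.isShift_zero x, Λ.isShift_zero x⟩⟩

end KGraph

namespace KGraph

variable {k : ℕ} {Λ : KGraph k}

theorem le_app {n m : Fin k → ℕ} (h : n ≤ m) (i : Fin k) : n i ≤ m i := h i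

/-! ### Path factorisation calculus -/

theorem eq_vertex_of_deg_zero {t : Λ.Path} (h : Λ.deg t = 0) :
    t = Λ.vertex (Λ.src t) ∧ t = Λ.vertex (Λ.rng t) := by
  have hd : Λ.deg t = 0 + 0 := by simp [h]
  obtain ⟨x, hx, hu⟩ := Λ.factorisation t 0 0 hd
  have h1 : ((Λ.vertex (Λ.rng t), t) : Λ.Path × Λ.Path) = x :=
    hu _ ⟨by rw [Λ.src_vertex], Λ.deg_vertex _, h, Λ.vertex_comp t⟩
  have h2 : ((t, Λ.vertex (Λ.src t)) : Λ.Path × Λ.Path) = x :=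
    hu _ ⟨(Λ.rng_vertex _).symm, h, Λ.deg_vertex _, Λ.comp_vertex t⟩
  have ha : Λ.vertex (Λ.rng t) = t := congrArg Prod.fst (h1.trans h2.symm)
  have hb : t = Λ.vertex (Λ.src t) := congrArg Prod.snd (h1.trans h2.symm)
  exact ⟨hb, ha.symm⟩

open Classical in
/-- Split a path at degree `n` (junk value if no factorisation exists). -/
noncomputable def split (Λ : KGraph k) (t : Λ.Path) (n : Fin k → ℕ) : Λ.Path × Λ.Path :=
  if h : ∃ x : Λ.Path × Λ.Path, Λ.src x.1 = Λ.rng x.2 ∧ Λ.deg x.1 = n ∧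
      Λ.deg x.2 = Λ.deg t - n ∧ Λ.comp x.1 x.2 = t then h.choose else (t, t)

/-- The initial segment of `t` of degree `n`. -/
noncomputable def headP (Λ : KGraph k) (t : Λ.Path) (n : Fin k → ℕ) : Λ.Path := (Λ.split t n).1

/-- The final segment of `t` starting at degree `n`. -/
noncomputable def tailP (Λ : KGraph k) (t : Λ.Path) (n : Fin k → ℕ) : Λ.Path := (Λ.split t n).2

/-- The middle segment of `t` between degrees `p` and `q`. -/
noncomputable def midP (Λ : KGraph k) (t : Λ.Path) (p q : Fin k → ℕ) : Λ.Path :=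
  Λ.headP (Λ.tailP t p) (q - p)

/-- The vertex of `t` at position `n`. -/
noncomputable def vtxP (Λ : KGraph k) (t : Λ.Path) (n : Fin k → ℕ) : Λ.Obj :=
  Λ.src (Λ.headP t n)

theorem split_spec {t : Λ.Path} {n : Fin k → ℕ} (h : n ≤ Λ.deg t) :
    Λ.src (Λ.headP t n) = Λ.rng (Λ.tailP t n) ∧ Λ.deg (Λ.headP t n) = n ∧
    Λ.deg (Λ.tailP t n) = Λ.deg t - n ∧ Λ.comp (Λ.headP t n) (Λ.tailP t n) = t := by
  have hd : Λ.deg t = n + (Λ.deg t - n) := by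
    funext i; have := le_app h i; simp only [Pi.add_apply, Pi.sub_apply]; omega
  obtain ⟨x, hx, -⟩ := Λ.factorisation t n (Λ.deg t - n) hd
  have he : ∃ x : Λ.Path × Λ.Path, Λ.src x.1 = Λ.rng x.2 ∧ Λ.deg x.1 = n ∧
      Λ.deg x.2 = Λ.deg t - n ∧ Λ.comp x.1 x.2 = t := ⟨x, hx⟩
  simp only [headP, tailP, split, dif_pos he]
  exact he.choose_spec

theorem src_headP {t : Λ.Path} {n : Fin k → ℕ} (h : n ≤ Λ.deg t) :
    Λ.src (Λ.headP t n) = Λ.rng (Λ.tailP t n) := (split_spec h).1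

theorem deg_headP {t : Λ.Path} {n : Fin k → ℕ} (h : n ≤ Λ.deg t) :
    Λ.deg (Λ.headP t n) = n := (split_spec h).2.1

theorem deg_tailP {t : Λ.Path} {n : Fin k → ℕ} (h : n ≤ Λ.deg t) :
    Λ.deg (Λ.tailP t n) = Λ.deg t - n := (split_spec h).2.2.1

theorem comp_headP_tailP {t : Λ.Path} {n : Fin k → ℕ} (h : n ≤ Λ.deg t) :
    Λ.comp (Λ.headP t n) (Λ.tailP t n) = t := (split_spec h).2.2.2

theorem split_unique {t a b : Λ.Path} {n : Fin k → ℕ} (h : n ≤ Λ.deg t)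
    (hab : Λ.src a = Λ.rng b) (hda : Λ.deg a = n) (hc : Λ.comp a b = t) :
    a = Λ.headP t n ∧ b = Λ.tailP t n := by
  have hd : Λ.deg t = n + (Λ.deg t - n) := by
    funext i; have := le_app h i; simp only [Pi.add_apply, Pi.sub_apply]; omega
  obtain ⟨x, -, hu⟩ := Λ.factorisation t n (Λ.deg t - n) hd
  have hdb : Λ.deg b = Λ.deg t - n := by
    have h2 := Λ.deg_comp a b hab
    rw [hc] at h2
    funext i
    have h3 := congrFun h2 i
    have h4 := congrFun hda i
    have h5 := le_app h i
    simp only [Pi.add_apply, Pi.sub_apply] at h3 h4 ⊢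
    omega
  have s := split_spec (Λ := Λ) h
  have h1 : ((a, b) : Λ.Path × Λ.Path) = x := hu _ ⟨hab, hda, hdb, hc⟩
  have h2 : ((Λ.headP t n, Λ.tailP t n) : Λ.Path × Λ.Path) = x :=
    hu _ ⟨s.1, s.2.1, s.2.2.1, s.2.2.2⟩
  exact ⟨congrArg Prod.fst (h1.trans h2.symm), congrArg Prod.snd (h1.trans h2.symm)⟩

theorem rng_headP {t : Λ.Path} {n : Fin k → ℕ} (h : n ≤ Λ.deg t) :
    Λ.rng (Λ.headP t n) = Λ.rng t := by
  conv_rhs => rw [← comp_headP_tailP (Λ := Λ) h]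
  rw [Λ.rng_comp _ _ (src_headP h)]

theorem src_tailP {t : Λ.Path} {n : Fin k → ℕ} (h : n ≤ Λ.deg t) :
    Λ.src (Λ.tailP t n) = Λ.src t := by
  conv_rhs => rw [← comp_headP_tailP (Λ := Λ) h]
  rw [Λ.src_comp _ _ (src_headP h)]

theorem headP_zero (t : Λ.Path) : Λ.headP t 0 = Λ.vertex (Λ.rng t) ∧ Λ.tailP t 0 = t :=
  have := split_unique (t := t) (n := 0) (by intro i; simp)
    (by rw [Λ.src_vertex]) (Λ.deg_vertex _) (Λ.vertex_comp t)
  ⟨this.1.symm, this.2.symm⟩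

theorem headP_deg (t : Λ.Path) : Λ.headP t (Λ.deg t) = t ∧ Λ.tailP t (Λ.deg t) = Λ.vertex (Λ.src t) :=
  have := split_unique (t := t) (n := Λ.deg t) le_rfl
    (Λ.rng_vertex _).symm rfl (Λ.comp_vertex t)
  ⟨this.1.symm, this.2.symm⟩

theorem headP_comp {a b : Λ.Path} (hab : Λ.src a = Λ.rng b) :
    Λ.headP (Λ.comp a b) (Λ.deg a) = a ∧ Λ.tailP (Λ.comp a b) (Λ.deg a) = b := by
  have hd : Λ.deg a ≤ Λ.deg (Λ.comp a b) := by
    rw [Λ.deg_comp a b hab]; intro i; simp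
  have := split_unique hd hab rfl rfl
  exact ⟨this.1.symm, this.2.symm⟩

theorem headP_add {u : Λ.Path} {m l : Fin k → ℕ} (h : m + l ≤ Λ.deg u) :
    Λ.headP u (m + l) = Λ.comp (Λ.headP u m) (Λ.headP (Λ.tailP u m) l) ∧
    Λ.tailP u (m + l) = Λ.tailP (Λ.tailP u m) l := by
  have hm : m ≤ Λ.deg u := fun i => le_trans (by simp) (le_app h i)
  have hl : l ≤ Λ.deg (Λ.tailP u m) := by
    rw [deg_tailP hm]; intro i
    have h1 := le_app h i
    have h2 := le_app hm i
    simp only [Pi.sub_apply, Pi.add_apply] at h1 ⊢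
    omega
  -- u = headP u m ∘ (headP (tailP u m) l ∘ tailP (tailP u m) l)
  have h1 := comp_headP_tailP (Λ := Λ) hm
  have h2 := comp_headP_tailP (Λ := Λ) hl
  have hcomp1 : Λ.src (Λ.headP (Λ.tailP u m) l) = Λ.rng (Λ.tailP (Λ.tailP u m) l) :=
    src_headP hl
  have hcomp0 : Λ.src (Λ.headP u m) = Λ.rng (Λ.headP (Λ.tailP u m) l) := by
    rw [src_headP hm, rng_headP hl]
  have key : Λ.comp (Λ.comp (Λ.headP u m) (Λ.headP (Λ.tailP u m) l))
      (Λ.tailP (Λ.tailP u m) l) = u := by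
    rw [Λ.comp_assoc _ _ _ hcomp0 hcomp1, h2, h1]
  have hsrc : Λ.src (Λ.comp (Λ.headP u m) (Λ.headP (Λ.tailP u m) l)) =
      Λ.rng (Λ.tailP (Λ.tailP u m) l) := by
    rw [Λ.src_comp _ _ hcomp0, hcomp1]
  have hdeg : Λ.deg (Λ.comp (Λ.headP u m) (Λ.headP (Λ.tailP u m) l)) = m + l := by
    rw [Λ.deg_comp _ _ hcomp0, deg_headP hm, deg_headP hl]
  have := split_unique h hsrc hdeg key
  exact ⟨this.1.symm, this.2.symm⟩

theorem midP_spec {t : Λ.Path} {p q : Fin k → ℕ} (hpq : p ≤ q) (hq : q ≤ Λ.deg t) :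
    Λ.deg (Λ.midP t p q) = q - p ∧ Λ.rng (Λ.midP t p q) = Λ.vtxP t p ∧
    Λ.src (Λ.midP t p q) = Λ.vtxP t q ∧
    Λ.headP t q = Λ.comp (Λ.headP t p) (Λ.midP t p q) ∧
    Λ.tailP t q = Λ.tailP (Λ.tailP t p) (q - p) := by
  have hp : p ≤ Λ.deg t := le_trans hpq hq
  have hml : p + (q - p) = q := by
    funext i; have := le_app hpq i; simp only [Pi.add_apply, Pi.sub_apply]; omega
  have hadd := headP_add (u := t) (m := p) (l := q - p) (by rw [hml]; exact hq)
  rw [hml] at hadd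
  have hql : q - p ≤ Λ.deg (Λ.tailP t p) := by
    rw [deg_tailP hp]; intro i
    have h1 := le_app hq i; simp only [Pi.sub_apply]; omega
  have hdeg : Λ.deg (Λ.midP t p q) = q - p := deg_headP hql
  have hrng : Λ.rng (Λ.midP t p q) = Λ.vtxP t p := by
    rw [midP, rng_headP hql, ← src_headP hp]; rfl
  have hcompat : Λ.src (Λ.headP t p) = Λ.rng (Λ.headP (Λ.tailP t p) (q - p)) := by
    rw [rng_headP hql, src_headP hp]
  have hsrc : Λ.src (Λ.midP t p q) = Λ.vtxP t q := by
    rw [midP, vtxP, hadd.1, Λ.src_comp _ _ hcompat]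
  exact ⟨hdeg, hrng, hsrc, hadd.1, hadd.2⟩

theorem deg_midP {t : Λ.Path} {p q : Fin k → ℕ} (hpq : p ≤ q) (hq : q ≤ Λ.deg t) :
    Λ.deg (Λ.midP t p q) = q - p := (midP_spec hpq hq).1

theorem rng_midP {t : Λ.Path} {p q : Fin k → ℕ} (hpq : p ≤ q) (hq : q ≤ Λ.deg t) :
    Λ.rng (Λ.midP t p q) = Λ.vtxP t p := (midP_spec hpq hq).2.1

theorem src_midP {t : Λ.Path} {p q : Fin k → ℕ} (hpq : p ≤ q) (hq : q ≤ Λ.deg t) :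
    Λ.src (Λ.midP t p q) = Λ.vtxP t q := (midP_spec hpq hq).2.2.1

theorem headP_eq_comp_midP {t : Λ.Path} {p q : Fin k → ℕ} (hpq : p ≤ q) (hq : q ≤ Λ.deg t) :
    Λ.headP t q = Λ.comp (Λ.headP t p) (Λ.midP t p q) := (midP_spec hpq hq).2.2.2.1

theorem tailP_tailP {t : Λ.Path} {p q : Fin k → ℕ} (hpq : p ≤ q) (hq : q ≤ Λ.deg t) :
    Λ.tailP t q = Λ.tailP (Λ.tailP t p) (q - p) := (midP_spec hpq hq).2.2.2.2

theorem midP_self {t : Λ.Path} {p : Fin k → ℕ} (hp : p ≤ Λ.deg t) :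
    Λ.midP t p p = Λ.vertex (Λ.vtxP t p) := by
  have hd : Λ.deg (Λ.midP t p p) = 0 := by
    rw [deg_midP le_rfl hp]; funext i; simp only [Pi.sub_apply, Pi.zero_apply]; omega
  rw [(eq_vertex_of_deg_zero hd).1, src_midP le_rfl hp]

theorem midP_zero {t : Λ.Path} {q : Fin k → ℕ} :
    Λ.midP t 0 q = Λ.headP t q := by
  have h0 : q - 0 = q := by funext i; simp
  rw [midP, (headP_zero t).2, h0]

theorem midP_full {t : Λ.Path} {p : Fin k → ℕ} (hp : p ≤ Λ.deg t) :
    Λ.midP t p (Λ.deg t) = Λ.tailP t p := by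
  rw [midP, ← deg_tailP hp]
  exact (headP_deg _).1

theorem comp_midP {t : Λ.Path} {p q r : Fin k → ℕ} (hpq : p ≤ q) (hqr : q ≤ r)
    (hr : r ≤ Λ.deg t) :
    Λ.comp (Λ.midP t p q) (Λ.midP t q r) = Λ.midP t p r := by
  have hq : q ≤ Λ.deg t := le_trans hqr hr
  have hp : p ≤ Λ.deg t := le_trans hpq hq
  have hu : r - p ≤ Λ.deg (Λ.tailP t p) := by
    rw [deg_tailP hp]; intro i; have := le_app hr i; simp only [Pi.sub_apply]; omega
  have hml : (q - p) + (r - q) = r - p := by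
    funext i
    have h1 := le_app hpq i; have h2 := le_app hqr i
    simp only [Pi.add_apply, Pi.sub_apply]; omega
  have hadd := headP_add (u := Λ.tailP t p) (m := q - p) (l := r - q) (by rw [hml]; exact hu)
  rw [hml] at hadd
  have : Λ.midP t q r = Λ.headP (Λ.tailP (Λ.tailP t p) (q - p)) (r - q) := by
    rw [midP, tailP_tailP hpq hq]
  rw [midP, this, midP, ← hadd.1]

theorem src_midP_rng {t : Λ.Path} {p q r : Fin k → ℕ} (hpq : p ≤ q) (hqr : q ≤ r)
    (hr : r ≤ Λ.deg t) :
    Λ.src (Λ.midP t p q) = Λ.rng (Λ.midP t q r) := by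
  rw [src_midP hpq (le_trans hqr hr), rng_midP hqr hr]

theorem headP_comp_left {c b : Λ.Path} {n : Fin k → ℕ} (hcb : Λ.src c = Λ.rng b)
    (hn : n ≤ Λ.deg c) :
    Λ.headP (Λ.comp c b) n = Λ.headP c n ∧
    Λ.tailP (Λ.comp c b) n = Λ.comp (Λ.tailP c n) b := by
  have h1 : Λ.src (Λ.tailP c n) = Λ.rng b := by rw [src_tailP hn, hcb]
  have h2 : Λ.src (Λ.headP c n) = Λ.rng (Λ.comp (Λ.tailP c n) b) := by
    rw [Λ.rng_comp _ _ h1, src_headP hn]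
  have hkey : Λ.comp (Λ.headP c n) (Λ.comp (Λ.tailP c n) b) = Λ.comp c b := by
    rw [← Λ.comp_assoc _ _ _ (src_headP hn) h1, comp_headP_tailP hn]
  have hle : n ≤ Λ.deg (Λ.comp c b) := by
    rw [Λ.deg_comp _ _ hcb]; intro i
    have := le_app hn i; simp only [Pi.add_apply]; omega
  have := split_unique hle h2 (deg_headP hn) hkey
  exact ⟨this.1.symm, this.2.symm⟩

theorem midP_comp_left {c b : Λ.Path} {p q : Fin k → ℕ} (hcb : Λ.src c = Λ.rng b)
    (hpq : p ≤ q) (hq : q ≤ Λ.deg c) :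
    Λ.midP (Λ.comp c b) p q = Λ.midP c p q := by
  have hp : p ≤ Λ.deg c := le_trans hpq hq
  have h1 : Λ.src (Λ.tailP c p) = Λ.rng b := by rw [src_tailP hp, hcb]
  have h2 : q - p ≤ Λ.deg (Λ.tailP c p) := by
    rw [deg_tailP hp]; intro i; have := le_app hq i; simp only [Pi.sub_apply]; omega
  rw [midP, midP, (headP_comp_left hcb hp).2, (headP_comp_left h1 h2).1]

theorem vtxP_comp_left {c b : Λ.Path} {n : Fin k → ℕ} (hcb : Λ.src c = Λ.rng b)
    (hn : n ≤ Λ.deg c) :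
    Λ.vtxP (Λ.comp c b) n = Λ.vtxP c n := by
  rw [vtxP, vtxP, (headP_comp_left hcb hn).1]

theorem tailP_comp_right {a b : Λ.Path} {p : Fin k → ℕ} (hab : Λ.src a = Λ.rng b)
    (hap : Λ.deg a ≤ p) (hp : p ≤ Λ.deg (Λ.comp a b)) :
    Λ.tailP (Λ.comp a b) p = Λ.tailP b (p - Λ.deg a) := by
  have hda : Λ.deg a ≤ Λ.deg (Λ.comp a b) := le_trans hap hp
  have := tailP_tailP (t := Λ.comp a b) hap hp
  rw [this, (headP_comp hab).2]

theorem midP_comp_right {a b : Λ.Path} {p q : Fin k → ℕ} (hab : Λ.src a = Λ.rng b)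
    (hap : Λ.deg a ≤ p) (hpq : p ≤ q) (hq : q ≤ Λ.deg (Λ.comp a b)) :
    Λ.midP (Λ.comp a b) p q = Λ.midP b (p - Λ.deg a) (q - Λ.deg a) := by
  have hp : p ≤ Λ.deg (Λ.comp a b) := le_trans hpq hq
  have hsub : (q - Λ.deg a) - (p - Λ.deg a) = q - p := by
    funext i; have h1 := le_app hap i; have h2 := le_app hpq i
    simp only [Pi.sub_apply]; omega
  rw [midP, midP, tailP_comp_right hab hap hp, hsub]

theorem minPairs_nonempty_of_commonExt {p q a b : Λ.Path} (hpa : Λ.src p = Λ.rng a)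
    (hqb : Λ.src q = Λ.rng b) (h : Λ.comp p a = Λ.comp q b) :
    (Λ.minPairs p q).Nonempty := by
  have hdt1 : Λ.deg (Λ.comp p a) = Λ.deg p + Λ.deg a := Λ.deg_comp p a hpa
  have hdt2 : Λ.deg (Λ.comp p a) = Λ.deg q + Λ.deg b := by rw [h]; exact Λ.deg_comp q b hqb
  have hMapp : ∀ i, (Λ.deg p ⊔ Λ.deg q) i = max (Λ.deg p i) (Λ.deg q i) := fun i => rfl
  have hMt : Λ.deg p ⊔ Λ.deg q ≤ Λ.deg (Λ.comp p a) := by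
    refine sup_le ?_ ?_
    · rw [Pi.le_def]; intro i
      have h1 := congrFun hdt1 i; simp only [Pi.add_apply] at h1; omega
    · rw [Pi.le_def]; intro i
      have h1 := congrFun hdt2 i; simp only [Pi.add_apply] at h1; omega
  have hpM : Λ.deg p ≤ Λ.deg p ⊔ Λ.deg q := le_sup_left
  have hqM : Λ.deg q ≤ Λ.deg p ⊔ Λ.deg q := le_sup_right
  have hhp : Λ.headP (Λ.comp p a) (Λ.deg p) = p := (headP_comp hpa).1
  have hhq : Λ.headP (Λ.comp p a) (Λ.deg q) = q := by rw [h]; exact (headP_comp hqb).1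
  refine ⟨(Λ.midP (Λ.comp p a) (Λ.deg p) (Λ.deg p ⊔ Λ.deg q),
      Λ.midP (Λ.comp p a) (Λ.deg q) (Λ.deg p ⊔ Λ.deg q)), ?_, ?_, ?_, ?_⟩
  · rw [rng_midP hpM hMt, vtxP, hhp]
  · rw [rng_midP hqM hMt, vtxP, hhq]
  · have e1 := headP_eq_comp_midP hpM hMt
    have e2 := headP_eq_comp_midP hqM hMt
    rw [hhp] at e1; rw [hhq] at e2
    rw [← e1, ← e2]
  · have e1 := headP_eq_comp_midP hpM hMt
    rw [hhp] at e1
    rw [← e1, deg_headP hMt]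

/-! ### ℕ∞ helpers -/

theorem enat_coe_le_sub {a : ℕ∞} {m q : ℕ} (hm : (m : ℕ∞) ≤ a) :
    ((q : ℕ∞) ≤ a - (m : ℕ∞)) ↔ (((m + q : ℕ) : ℕ∞) ≤ a) := by
  induction a using ENat.recTopCoe with
  | top => simp
  | coe n =>
    rw [← ENat.coe_sub, Nat.cast_le, Nat.cast_le]
    rw [Nat.cast_le] at hm
    omega

theorem enat_add_sub_left (m : ℕ) (a : ℕ∞) : ((m : ℕ∞) + a) - (m : ℕ∞) = a := by
  induction a using ENat.recTopCoe with
  | top => simp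
  | coe n => rw [← Nat.cast_add, ← ENat.coe_sub, Nat.cast_inj]; omega

/-! ### Boundary path segment lemmas -/

/-- Validity of a position on a boundary path. -/
def BValid (x : Λ.BoundaryPath) (n : Fin k → ℕ) : Prop := ∀ i, (n i : ℕ∞) ≤ x.deg i

theorem BValid.mono {x : Λ.BoundaryPath} {n m : Fin k → ℕ} (h : BValid x m) (hnm : n ≤ m) :
    BValid x n := fun i =>
  le_trans (by exact_mod_cast Nat.cast_le.mpr (le_app hnm i)) (h i)

theorem rng_seg {x : Λ.BoundaryPath} {p q : Fin k → ℕ} (hpq : p ≤ q) (hq : BValid x q) :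
    Λ.rng (x.seg p q) = x.vtx p :=
  (x.src_seg p p q le_rfl hpq hq).symm

theorem src_seg' {x : Λ.BoundaryPath} {p q : Fin k → ℕ} (hpq : p ≤ q) (hq : BValid x q) :
    Λ.src (x.seg p q) = x.vtx q := by
  rw [x.src_seg p q q hpq le_rfl hq]
  conv_lhs => rw [x.seg_self q hq]
  rw [Λ.rng_vertex]
  rfl

theorem seg_eq_headP {x : Λ.BoundaryPath} {p q r : Fin k → ℕ} (hpq : p ≤ q) (hqr : q ≤ r)
    (hr : BValid x r) :
    x.seg p q = Λ.headP (x.seg p r) (q - p) ∧ x.seg q r = Λ.tailP (x.seg p r) (q - p) := by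
  have hpr : p ≤ r := le_trans hpq hqr
  have hq : BValid x q := hr.mono hqr
  have hdr : Λ.deg (x.seg p r) = r - p := x.deg_seg p r hpr hr
  have hle : q - p ≤ Λ.deg (x.seg p r) := by
    rw [hdr, Pi.le_def]; intro i
    have h1 := le_app hpq i; have h2 := le_app hqr i
    simp only [Pi.sub_apply]; omega
  exact split_unique hle (x.src_seg p q r hpq hqr hr)
    (x.deg_seg p q hpq hq) (x.comp_seg p q r hpq hqr hr)

/-! ### Shifts of boundary paths -/

/-- The shift `σⁿ x` of a boundary path. -/
noncomputable def shiftBP (x : Λ.BoundaryPath) (n : Fin k → ℕ)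
    (hn : ∀ i, (n i : ℕ∞) ≤ x.deg i) : Λ.BoundaryPath where
  deg i := x.deg i - (n i : ℕ∞)
  seg p q := x.seg (n + p) (n + q)
  deg_seg p q hpq hq := by
    have hq' : ∀ i, (((n + q) i : ℕ) : ℕ∞) ≤ x.deg i := fun i => by
      have h2 := (enat_coe_le_sub (hn i)).mp (hq i)
      simpa using h2
    rw [x.deg_seg (n+p) (n+q)
      (by rw [Pi.le_def]; intro i; have := le_app hpq i; simp only [Pi.add_apply]; omega) hq']
    funext i; simp only [Pi.sub_apply, Pi.add_apply]; omega
  seg_self p hp := x.seg_self (n + p) (fun i => by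
    have h2 := (enat_coe_le_sub (hn i)).mp (hp i); simpa using h2)
  src_seg p q r hpq hqr hr := x.src_seg (n+p) (n+q) (n+r)
    (by rw [Pi.le_def]; intro i; have := le_app hpq i; simp only [Pi.add_apply]; omega)
    (by rw [Pi.le_def]; intro i; have := le_app hqr i; simp only [Pi.add_apply]; omega)
    (fun i => by have h2 := (enat_coe_le_sub (hn i)).mp (hr i); simpa using h2)
  comp_seg p q r hpq hqr hr := x.comp_seg (n+p) (n+q) (n+r)
    (by rw [Pi.le_def]; intro i; have := le_app hpq i; simp only [Pi.add_apply]; omega)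
    (by rw [Pi.le_def]; intro i; have := le_app hqr i; simp only [Pi.add_apply]; omega)
    (fun i => by have h2 := (enat_coe_le_sub (hn i)).mp (hr i); simpa using h2)
  boundary m hm E hE := by
    obtain ⟨p, hpE, hval, hseg⟩ := x.boundary (n + m)
      (fun i => by have h2 := (enat_coe_le_sub (hn i)).mp (hm i); simpa using h2) E hE
    refine ⟨p, hpE, fun i => ?_, ?_⟩
    · rw [enat_coe_le_sub (hn i)]
      have := hval i
      simp only [Pi.add_apply] at this ⊢
      convert this using 2
      omega
    · show x.seg (n + m) (n + (m + Λ.deg p)) = p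
      have harr : n + (m + Λ.deg p) = n + m + Λ.deg p := by
        funext i; simp only [Pi.add_apply]; omega
      rw [harr]; exact hseg

theorem isShift_shiftBP (x : Λ.BoundaryPath) (n : Fin k → ℕ)
    (hn : ∀ i, (n i : ℕ∞) ≤ x.deg i) : Λ.IsShift n x (shiftBP x n hn) :=
  ⟨hn, fun _ => rfl, fun _ _ _ _ => rfl⟩

/-! ### Cylinder sets -/

theorem mem_ZC_iff {p : Λ.Path} {x : Λ.BoundaryPath} :
    x ∈ Λ.ZC p ↔ (∀ i, (Λ.deg p i : ℕ∞) ≤ x.deg i) ∧ x.seg 0 (Λ.deg p) = p := by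
  constructor
  · rintro ⟨z, ⟨⟨hle, hdeg, hseg⟩, hpre⟩⟩
    exact ⟨hle, hpre⟩
  · rintro ⟨h1, h2⟩
    exact ⟨shiftBP x (Λ.deg p) h1, ⟨isShift_shiftBP _ _ h1, h2⟩⟩

theorem mem_ZC_comp {a b : Λ.Path} (hab : Λ.src a = Λ.rng b) {x : Λ.BoundaryPath}
    (h : x ∈ Λ.ZC (Λ.comp a b)) : x ∈ Λ.ZC a := by
  rw [mem_ZC_iff] at h ⊢
  obtain ⟨hle, hpre⟩ := h
  have hdd : Λ.deg (Λ.comp a b) = Λ.deg a + Λ.deg b := Λ.deg_comp a b hab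
  have hdle : Λ.deg a ≤ Λ.deg (Λ.comp a b) := by
    rw [hdd, Pi.le_def]; intro i; simp only [Pi.add_apply]; omega
  have hval : BValid x (Λ.deg (Λ.comp a b)) := hle
  refine ⟨fun i => le_trans (Nat.cast_le.mpr (le_app hdle i)) (hle i), ?_⟩
  have hz : (0 : Fin k → ℕ) ≤ Λ.deg a := by rw [Pi.le_def]; intro i; simp
  have := (seg_eq_headP hz hdle hval).1
  rw [this, hpre]
  have h0 : Λ.deg a - 0 = Λ.deg a := by funext i; simp
  rw [h0, (headP_comp hab).1]

/-! ### Concatenation of a path and a boundary path -/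

theorem enat_sub_le {a : ℕ∞} {d q : ℕ} (h : (q : ℕ∞) ≤ (d : ℕ∞) + a) :
    ((q - d : ℕ) : ℕ∞) ≤ a := by
  induction a using ENat.recTopCoe with
  | top => simp
  | coe n =>
    rw [← Nat.cast_add, Nat.cast_le] at h
    rw [Nat.cast_le]; omega

theorem sup_app (m n : Fin k → ℕ) (i : Fin k) : (m ⊔ n) i = max (m i) (n i) := rfl

/-- Validity of a position on the concatenation `l·x`. -/
def CValid (l : Λ.Path) (x : Λ.BoundaryPath) (q : Fin k → ℕ) : Prop :=
  ∀ i, (q i : ℕ∞) ≤ (Λ.deg l i : ℕ∞) + x.deg i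

theorem CValid.mono {l : Λ.Path} {x : Λ.BoundaryPath} {q q' : Fin k → ℕ}
    (h : CValid l x q') (hle : q ≤ q') : CValid l x q := fun i =>
  le_trans (Nat.cast_le.mpr (le_app hle i)) (h i)

theorem cvalid_deg (l : Λ.Path) (x : Λ.BoundaryPath) : CValid l x (Λ.deg l) :=
  fun _ => le_self_add

/-- The initial segment of the concatenation `l·x` of degree `q ⊔ deg l`. -/
noncomputable def catSeg (l : Λ.Path) (x : Λ.BoundaryPath) (q : Fin k → ℕ) : Λ.Path :=
  Λ.comp l (x.seg 0 ((q ⊔ Λ.deg l) - Λ.deg l))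

section CatSeg

variable {l : Λ.Path} {x : Λ.BoundaryPath}

theorem catSeg_bvalid (hq : CValid l x q) : BValid x ((q ⊔ Λ.deg l) - Λ.deg l) := by
  intro i
  have h1 := hq i
  simp only [Pi.add_apply, Pi.sub_apply, Pi.zero_apply, Pi.sup_apply]
  have h2 : ((max (q i) (Λ.deg l i) : ℕ) : ℕ∞) ≤ (Λ.deg l i : ℕ∞) + x.deg i := by
    rcases le_total (q i) (Λ.deg l i) with h | h
    · rw [max_eq_right h]; exact le_self_add
    · rw [max_eq_left h]; exact h1
  exact enat_sub_le h2

theorem catSeg_compat (hl : Λ.src l = x.rng) (hq : CValid l x q) :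
    Λ.src l = Λ.rng (x.seg 0 ((q ⊔ Λ.deg l) - Λ.deg l)) := by
  rw [rng_seg (by rw [Pi.le_def]; intro i; simp) (catSeg_bvalid hq), hl]
  rfl

theorem deg_catSeg (hl : Λ.src l = x.rng) (hq : CValid l x q) :
    Λ.deg (catSeg l x q) = q ⊔ Λ.deg l := by
  rw [catSeg, Λ.deg_comp _ _ (catSeg_compat hl hq),
    x.deg_seg 0 _ (by rw [Pi.le_def]; intro i; simp) (catSeg_bvalid hq)]
  funext i
  simp only [Pi.add_apply, Pi.sub_apply, Pi.zero_apply, Pi.sup_apply]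
  omega

theorem le_deg_catSeg (hl : Λ.src l = x.rng) (hq : CValid l x q) :
    q ≤ Λ.deg (catSeg l x q) := by
  rw [deg_catSeg hl hq, Pi.le_def]; intro i; simp only [Pi.sup_apply]; omega

theorem catSeg_step (hl : Λ.src l = x.rng) {q q' : Fin k → ℕ} (hq' : CValid l x q')
    (hle : q ≤ q') :
    catSeg l x q' = Λ.comp (catSeg l x q)
      (x.seg ((q ⊔ Λ.deg l) - Λ.deg l) ((q' ⊔ Λ.deg l) - Λ.deg l)) := by
  have hq : CValid l x q := hq'.mono hle
  have hm12 : (q ⊔ Λ.deg l) - Λ.deg l ≤ (q' ⊔ Λ.deg l) - Λ.deg l := by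
    rw [Pi.le_def]; intro i
    have := le_app hle i
    simp only [Pi.add_apply, Pi.sub_apply, Pi.zero_apply, Pi.sup_apply]; omega
  have hb2 := catSeg_bvalid (l := l) (x := x) hq'
  have hb1 := catSeg_bvalid (l := l) (x := x) hq
  have h0 : (0 : Fin k → ℕ) ≤ (q ⊔ Λ.deg l) - Λ.deg l := by rw [Pi.le_def]; intro i; simp
  have hsplit := x.comp_seg 0 ((q ⊔ Λ.deg l) - Λ.deg l) ((q' ⊔ Λ.deg l) - Λ.deg l)
    h0 hm12 hb2
  have hc1 : Λ.src (x.seg 0 ((q ⊔ Λ.deg l) - Λ.deg l)) =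
      Λ.rng (x.seg ((q ⊔ Λ.deg l) - Λ.deg l) ((q' ⊔ Λ.deg l) - Λ.deg l)) := by
    rw [src_seg' h0 hb1, rng_seg hm12 hb2]
  rw [catSeg, catSeg, ← hsplit, ← Λ.comp_assoc _ _ _ (catSeg_compat hl hq) hc1]

theorem midP_catSeg_stable (hl : Λ.src l = x.rng) {p q q' : Fin k → ℕ}
    (hq' : CValid l x q') (hle : q ≤ q') (hpq : p ≤ q) :
    Λ.midP (catSeg l x q') p q = Λ.midP (catSeg l x q) p q := by
  have hq : CValid l x q := hq'.mono hle
  have hm12 : (q ⊔ Λ.deg l) - Λ.deg l ≤ (q' ⊔ Λ.deg l) - Λ.deg l := by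
    rw [Pi.le_def]; intro i
    have := le_app hle i
    simp only [Pi.add_apply, Pi.sub_apply, Pi.zero_apply, Pi.sup_apply]; omega
  have h0 : (0 : Fin k → ℕ) ≤ (q ⊔ Λ.deg l) - Λ.deg l := by rw [Pi.le_def]; intro i; simp
  have hcompat : Λ.src (catSeg l x q) =
      Λ.rng (x.seg ((q ⊔ Λ.deg l) - Λ.deg l) ((q' ⊔ Λ.deg l) - Λ.deg l)) := by
    rw [catSeg, Λ.src_comp _ _ (catSeg_compat hl hq),
      src_seg' h0 (catSeg_bvalid hq), rng_seg hm12 (catSeg_bvalid hq')]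
  rw [catSeg_step hl hq' hle, midP_comp_left hcompat hpq (le_deg_catSeg hl hq)]

end CatSeg

theorem midP_prefix_eq {t' : Λ.Path} {p q r : Fin k → ℕ} (hpq : p ≤ q) (hqr : q ≤ r)
    (hr : r ≤ Λ.deg t') {a b : Λ.Path} (hab : Λ.src a = Λ.rng b) (hda : Λ.deg a = q - p)
    (hcomp : Λ.comp a b = Λ.midP t' p r) : Λ.midP t' p q = a := by
  have hpr : p ≤ r := le_trans hpq hqr
  have hq : q ≤ Λ.deg t' := le_trans hqr hr
  have hdm : Λ.deg (Λ.midP t' p r) = r - p := deg_midP hpr hr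
  have hle : q - p ≤ Λ.deg (Λ.midP t' p r) := by
    rw [hdm, Pi.le_def]; intro i
    have h1 := le_app hqr i; have h2 := le_app hpq i
    simp only [Pi.sub_apply]; omega
  have h1 := split_unique hle hab hda hcomp
  have h2 := split_unique hle (src_midP_rng hpq hqr hr)
    (deg_midP hpq hq) (comp_midP hpq hqr hr)
  rw [h2.1, h1.1]

/-- The extension `Ext(μ; E)` of a finite exhaustive set `E` along `μ` is finite
exhaustive at `s(μ)`, provided no element of `E` is an initial segment of `μ`. -/
theorem extSet_FE (hfa : Λ.FinitelyAligned) {x : Λ.BoundaryPath} {μ : Λ.Path}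
    {m : Fin k → ℕ} (hsμ : Λ.src μ = Λ.src (x.seg m m)) {E : Set Λ.Path}
    (hE : Λ.FE (Λ.rng μ) E)
    (hno : ¬ ∃ q ∈ E, ∃ t, Λ.src q = Λ.rng t ∧ Λ.comp q t = μ) :
    Λ.FE (Λ.src (x.seg m m)) {r | ∃ q ∈ E, ∃ t, (r, t) ∈ Λ.minPairs μ q} := by
  refine ⟨?_, ?_, ?_⟩
  · refine Set.Finite.subset (Set.Finite.biUnion hE.1
      (fun q _ => Set.Finite.image Prod.fst (hfa μ q))) ?_
    rintro r ⟨q, hq, t, ht⟩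
    exact Set.mem_biUnion hq ⟨(r, t), ht, rfl⟩
  · rintro r ⟨q, hq, t, ht⟩
    obtain ⟨h1, h2, h3, h4⟩ := ht
    refine ⟨by rw [← h1, hsμ], ?_⟩
    intro hveq
    refine hno ⟨q, hq, t, h2, ?_⟩
    rw [← h3, hveq, ← hsμ, Λ.comp_vertex μ]
  · intro a ha
    have hμa : Λ.src μ = Λ.rng a := by rw [hsμ, ← ha]
    have hrμa : Λ.rng (Λ.comp μ a) = Λ.rng μ := Λ.rng_comp μ a hμa
    obtain ⟨q, hq, ⟨⟨ρ, τ⟩, hmin⟩⟩ := hE.2.2 (Λ.comp μ a) hrμa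
    obtain ⟨hm1, hm2, hm3, hm4⟩ := hmin
    have haρ : Λ.src a = Λ.rng ρ := by rw [← Λ.src_comp μ a hμa]; exact hm1
    have hca : Λ.src μ = Λ.rng (Λ.comp a ρ) := by rw [Λ.rng_comp a ρ haρ, hμa]
    have hw2 : Λ.comp (Λ.comp μ a) ρ = Λ.comp μ (Λ.comp a ρ) := Λ.comp_assoc μ a ρ hμa haρ
    have hhμ : Λ.headP (Λ.comp (Λ.comp μ a) ρ) (Λ.deg μ) = μ := by
      rw [hw2]; exact (headP_comp hca).1
    have htμ : Λ.tailP (Λ.comp (Λ.comp μ a) ρ) (Λ.deg μ) = Λ.comp a ρ := by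
      rw [hw2]; exact (headP_comp hca).2
    have hhq : Λ.headP (Λ.comp (Λ.comp μ a) ρ) (Λ.deg q) = q := by
      rw [hm3]; exact (headP_comp hm2).1
    have hdw1 : Λ.deg (Λ.comp (Λ.comp μ a) ρ) = Λ.deg μ + (Λ.deg a + Λ.deg ρ) := by
      rw [hw2, Λ.deg_comp _ _ hca, Λ.deg_comp _ _ haρ]
    have hdw2 : Λ.deg (Λ.comp (Λ.comp μ a) ρ) = Λ.deg q + Λ.deg τ := by
      rw [hm3, Λ.deg_comp _ _ hm2]
    have hMw : Λ.deg μ ⊔ Λ.deg q ≤ Λ.deg (Λ.comp (Λ.comp μ a) ρ) := by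
      refine sup_le ?_ ?_
      · rw [Pi.le_def]; intro i
        have h1 := congrFun hdw1 i; simp only [Pi.add_apply] at h1; omega
      · rw [Pi.le_def]; intro i
        have h1 := congrFun hdw2 i; simp only [Pi.add_apply] at h1; omega
    have hμM : Λ.deg μ ≤ Λ.deg μ ⊔ Λ.deg q := le_sup_left
    have hqM : Λ.deg q ≤ Λ.deg μ ⊔ Λ.deg q := le_sup_right
    have e1 := headP_eq_comp_midP hμM hMw
    rw [hhμ] at e1
    have e2 := headP_eq_comp_midP hqM hMw
    rw [hhq] at e2
    have hsr : Λ.src μ =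
        Λ.rng (Λ.midP (Λ.comp (Λ.comp μ a) ρ) (Λ.deg μ) (Λ.deg μ ⊔ Λ.deg q)) := by
      rw [rng_midP hμM hMw, vtxP, hhμ]
    have hsτ : Λ.src q =
        Λ.rng (Λ.midP (Λ.comp (Λ.comp μ a) ρ) (Λ.deg q) (Λ.deg μ ⊔ Λ.deg q)) := by
      rw [rng_midP hqM hMw, vtxP, hhq]
    have hrmem : (Λ.midP (Λ.comp (Λ.comp μ a) ρ) (Λ.deg μ) (Λ.deg μ ⊔ Λ.deg q),
        Λ.midP (Λ.comp (Λ.comp μ a) ρ) (Λ.deg q) (Λ.deg μ ⊔ Λ.deg q)) ∈ Λ.minPairs μ q := by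
      refine ⟨hsr, hsτ, by rw [← e1, ← e2], by rw [← e1, deg_headP hMw]⟩
    refine ⟨_, ⟨q, hq, _, hrmem⟩, ?_⟩
    -- common extension of `a` and the minimal extension
    have hu2 : Λ.comp (Λ.midP (Λ.comp (Λ.comp μ a) ρ) (Λ.deg μ) (Λ.deg μ ⊔ Λ.deg q))
        (Λ.midP (Λ.comp (Λ.comp μ a) ρ) (Λ.deg μ ⊔ Λ.deg q)
          (Λ.deg (Λ.comp (Λ.comp μ a) ρ))) = Λ.comp a ρ := by
      rw [comp_midP hμM hMw le_rfl]
      have hμw : Λ.deg μ ≤ Λ.deg (Λ.comp (Λ.comp μ a) ρ) := le_trans hμM hMw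
      rw [midP_full hμw, htμ]
    have hqb : Λ.src (Λ.midP (Λ.comp (Λ.comp μ a) ρ) (Λ.deg μ) (Λ.deg μ ⊔ Λ.deg q)) =
        Λ.rng (Λ.midP (Λ.comp (Λ.comp μ a) ρ) (Λ.deg μ ⊔ Λ.deg q)
          (Λ.deg (Λ.comp (Λ.comp μ a) ρ))) := by
      rw [src_midP hμM hMw, rng_midP hMw le_rfl]
    exact minPairs_nonempty_of_commonExt haρ hqb hu2.symm

set_option maxHeartbeats 1000000 in
theorem concat_boundary (hfa : Λ.FinitelyAligned) (l : Λ.Path) (x : Λ.BoundaryPath)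
    (hl : Λ.src l = x.rng) (n : Fin k → ℕ) (hn : CValid l x n) (E : Set Λ.Path)
    (hE : Λ.FE (Λ.src (Λ.midP (catSeg l x n) n n)) E) :
    ∃ p ∈ E, CValid l x (n + Λ.deg p) ∧
      Λ.midP (catSeg l x (n + Λ.deg p)) n (n + Λ.deg p) = p := by
  classical
  set N := n ⊔ Λ.deg l with hN
  have hnN : n ≤ N := le_sup_left
  have hdN : Λ.deg l ≤ N := le_sup_right
  have hNval : CValid l x N := by
    intro i
    have hNi : N i = max (n i) (Λ.deg l i) := rfl
    rcases le_total (n i) (Λ.deg l i) with h | h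
    · rw [hNi, max_eq_right h]; exact le_self_add
    · rw [hNi, max_eq_left h]; exact hn i
  have hTdeg : Λ.deg (catSeg l x N) = N := by
    rw [deg_catSeg hl hNval]
    funext i
    have h1 := le_app hdN i
    simp only [Pi.sup_apply]
    omega
  have hNT : N ≤ Λ.deg (catSeg l x N) := le_of_eq hTdeg.symm
  have hbm : BValid x ((N ⊔ Λ.deg l) - Λ.deg l) := catSeg_bvalid hNval
  have h0m : (0 : Fin k → ℕ) ≤ (N ⊔ Λ.deg l) - Λ.deg l := by rw [Pi.le_def]; intro i; simp
  have hdegμ : Λ.deg (Λ.midP (catSeg l x N) n N) = N - n := deg_midP hnN hNT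
  have hstab0 : Λ.midP (catSeg l x N) n n = Λ.midP (catSeg l x n) n n :=
    midP_catSeg_stable hl hNval hnN le_rfl
  have hrngμ : Λ.rng (Λ.midP (catSeg l x N) n N) = Λ.src (Λ.midP (catSeg l x n) n n) := by
    rw [rng_midP hnN hNT, ← hstab0, src_midP (le_refl n) (le_trans hnN hNT)]
  have hheadT : Λ.headP (catSeg l x N) N = catSeg l x N := by
    have h1 := (headP_deg (catSeg l x N)).1
    rw [hTdeg] at h1
    exact h1
  have hsμx : Λ.src (Λ.midP (catSeg l x N) n N) =
      Λ.src (x.seg ((N ⊔ Λ.deg l) - Λ.deg l) ((N ⊔ Λ.deg l) - Λ.deg l)) := by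
    rw [src_midP hnN hNT, vtxP, hheadT, catSeg,
      Λ.src_comp _ _ (catSeg_compat hl hNval), src_seg' h0m hbm]
    rfl
  by_cases hca : ∃ q ∈ E, ∃ t, Λ.src q = Λ.rng t ∧
      Λ.comp q t = Λ.midP (catSeg l x N) n N
  · obtain ⟨q, hq, t, hqt, hμqt⟩ := hca
    have hdq : n + Λ.deg q ≤ N := by
      have hdμ : Λ.deg (Λ.midP (catSeg l x N) n N) = Λ.deg q + Λ.deg t := by
        rw [← hμqt]; exact Λ.deg_comp q t hqt
      rw [Pi.le_def]; intro i
      have h1 := congrFun hdμ i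
      have h2 := congrFun hdegμ i
      have h3 := le_app hnN i
      simp only [Pi.add_apply, Pi.sub_apply] at h1 h2 ⊢
      omega
    have hnq : n ≤ n + Λ.deg q := by
      rw [Pi.le_def]; intro i; simp only [Pi.add_apply]; omega
    refine ⟨q, hq, hNval.mono hdq, ?_⟩
    rw [← midP_catSeg_stable hl hNval hdq hnq]
    exact midP_prefix_eq hnq hdq hNT hqt
      (by funext i; simp only [Pi.add_apply, Pi.sub_apply]; omega) hμqt
  · have hE' : Λ.FE (Λ.rng (Λ.midP (catSeg l x N) n N)) E := by rw [hrngμ]; exact hE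
    have hFE := extSet_FE hfa hsμx hE' hca
    obtain ⟨r, hrH, hrv, hseg⟩ := x.boundary ((N ⊔ Λ.deg l) - Λ.deg l) hbm _ hFE
    obtain ⟨q, hq, t, hm1, hm2, hm3, hm4⟩ := hrH
    have hNK : N ≤ N + Λ.deg r := by
      rw [Pi.le_def]; intro i; simp only [Pi.add_apply]; omega
    have hKval : CValid l x (N + Λ.deg r) := by
      intro i
      have hKi : (N + Λ.deg r) i = Λ.deg l i + ((((N ⊔ Λ.deg l) - Λ.deg l) + Λ.deg r) i) := by
        have h5 := le_app hdN i
        simp only [Pi.add_apply, Pi.sub_apply, Pi.sup_apply]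
        omega
      rw [hKi, Nat.cast_add]
      exact add_le_add_right (hrv i) _
    have hdq2 : n + Λ.deg q ≤ N + Λ.deg r := by
      rw [Pi.le_def]; intro i
      have h5 := congrFun hm4 i
      have h6 : Λ.deg (Λ.comp (Λ.midP (catSeg l x N) n N) r) = (N - n) + Λ.deg r := by
        rw [Λ.deg_comp _ _ hm1, hdegμ]
      have h7 := congrFun h6 i
      have h8 := le_app hnN i
      simp only [Pi.add_apply, Pi.sub_apply, Pi.sup_apply] at h5 h7 ⊢
      omega
    have hnq : n ≤ n + Λ.deg q := by
      rw [Pi.le_def]; intro i; simp only [Pi.add_apply]; omega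
    refine ⟨q, hq, hKval.mono hdq2, ?_⟩
    rw [← midP_catSeg_stable hl hKval hdq2 hnq]
    have hKdeg : Λ.deg (catSeg l x (N + Λ.deg r)) = N + Λ.deg r := by
      rw [deg_catSeg hl hKval]; funext i
      have h5 := le_app hdN i
      simp only [Pi.add_apply, Pi.sup_apply]
      omega
    have hKT : N + Λ.deg r ≤ Λ.deg (catSeg l x (N + Λ.deg r)) := le_of_eq hKdeg.symm
    have hμK : Λ.midP (catSeg l x (N + Λ.deg r)) n N = Λ.midP (catSeg l x N) n N :=
      midP_catSeg_stable hl hKval hNK hnN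
    have hmK : ((N + Λ.deg r) ⊔ Λ.deg l) - Λ.deg l = ((N ⊔ Λ.deg l) - Λ.deg l) + Λ.deg r := by
      funext i
      have h5 := le_app hdN i
      simp only [Pi.add_apply, Pi.sub_apply, Pi.sup_apply]
      omega
    have hstep := catSeg_step hl hKval hNK
    rw [hmK] at hstep
    have hvalm : BValid x (((N ⊔ Λ.deg l) - Λ.deg l) + Λ.deg r) := hrv
    have hmle : (N ⊔ Λ.deg l) - Λ.deg l ≤ ((N ⊔ Λ.deg l) - Λ.deg l) + Λ.deg r := by
      rw [Pi.le_def]; intro i; simp only [Pi.add_apply]; omega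
    have hcompatTK : Λ.src (catSeg l x N) =
        Λ.rng (x.seg ((N ⊔ Λ.deg l) - Λ.deg l) (((N ⊔ Λ.deg l) - Λ.deg l) + Λ.deg r)) := by
      rw [catSeg, Λ.src_comp _ _ (catSeg_compat hl hNval), src_seg' h0m hbm,
        rng_seg hmle hvalm]
    have hrK : Λ.midP (catSeg l x (N + Λ.deg r)) N (N + Λ.deg r) = r := by
      rw [hstep, midP_comp_right hcompatTK (le_of_eq hTdeg) hNK
        (by rw [← hstep]; exact hKT), hTdeg]
      have h5 : N - N = (0 : Fin k → ℕ) := by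
        funext i; simp only [Pi.sub_apply, Pi.zero_apply]; omega
      have h6 : (N + Λ.deg r) - N = Λ.deg r := by
        funext i; simp only [Pi.add_apply, Pi.sub_apply]; omega
      rw [h5, h6, midP_zero]
      have h7 : Λ.deg (x.seg ((N ⊔ Λ.deg l) - Λ.deg l) (((N ⊔ Λ.deg l) - Λ.deg l) + Λ.deg r)) = Λ.deg r := by
        rw [x.deg_seg _ _ hmle hvalm]; funext i
        simp only [Pi.add_apply, Pi.sub_apply]; omega
      have h8 := (headP_deg (x.seg ((N ⊔ Λ.deg l) - Λ.deg l) (((N ⊔ Λ.deg l) - Λ.deg l) + Λ.deg r))).1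
      rw [h7] at h8
      rw [h8, hseg]
    have hcompK := comp_midP hnN hNK hKT
    rw [hμK, hrK] at hcompK
    refine midP_prefix_eq hnq hdq2 hKT hm2 ?_ ?_
    · funext i; simp only [Pi.add_apply, Pi.sub_apply]; omega
    · rw [← hcompK, hm3]

/-- The concatenation `l·x` of a path and a boundary path. -/
noncomputable def concatBP (hfa : Λ.FinitelyAligned) (l : Λ.Path) (x : Λ.BoundaryPath)
    (hl : Λ.src l = x.rng) : Λ.BoundaryPath where
  deg i := (Λ.deg l i : ℕ∞) + x.deg i
  seg p q := Λ.midP (catSeg l x q) p q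
  deg_seg p q hpq hq := deg_midP hpq (le_deg_catSeg hl hq)
  seg_self p hp := by
    show Λ.midP (catSeg l x p) p p = Λ.vertex (Λ.src (Λ.midP (catSeg l x p) p p))
    rw [midP_self (le_deg_catSeg hl hp), Λ.src_vertex]
  src_seg p q r hpq hqr hr := by
    show Λ.src (Λ.midP (catSeg l x q) p q) = Λ.rng (Λ.midP (catSeg l x r) q r)
    rw [← midP_catSeg_stable hl hr hqr hpq]
    exact src_midP_rng hpq hqr (le_deg_catSeg hl hr)
  comp_seg p q r hpq hqr hr := by
    show Λ.comp (Λ.midP (catSeg l x q) p q) (Λ.midP (catSeg l x r) q r) =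
      Λ.midP (catSeg l x r) p r
    rw [← midP_catSeg_stable hl hr hqr hpq]
    exact comp_midP hpq hqr (le_deg_catSeg hl hr)
  boundary n hn E hE := by
    obtain ⟨p, hp, h1, h2⟩ := concat_boundary hfa l x hl n hn E hE
    exact ⟨p, hp, h1, h2⟩

theorem isConcat_concatBP (hfa : Λ.FinitelyAligned) (l : Λ.Path) (x : Λ.BoundaryPath)
    (hl : Λ.src l = x.rng) : Λ.IsConcat l x (concatBP hfa l x hl) := by
  constructor
  · refine ⟨fun i => le_self_add, fun i => (enat_add_sub_left _ _).symm, ?_⟩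
    intro p q hpq hq
    have hq' : CValid l x (Λ.deg l + q) := by
      intro i; simp only [Pi.add_apply]; rw [Nat.cast_add]; exact add_le_add_right (hq i) _
    show x.seg p q = Λ.midP (catSeg l x (Λ.deg l + q)) (Λ.deg l + p) (Λ.deg l + q)
    have hmq : ((Λ.deg l + q) ⊔ Λ.deg l) - Λ.deg l = q := by
      funext i; simp only [Pi.add_apply, Pi.sub_apply, Pi.sup_apply]; omega
    have hlp : Λ.deg l ≤ Λ.deg l + p := by
      rw [Pi.le_def]; intro i; simp only [Pi.add_apply]; omega
    have hpq' : Λ.deg l + p ≤ Λ.deg l + q := by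
      rw [Pi.le_def]; intro i; have := le_app hpq i; simp only [Pi.add_apply]; omega
    have hqd : Λ.deg l + q ≤ Λ.deg (catSeg l x (Λ.deg l + q)) := le_deg_catSeg hl hq'
    have hcompat : Λ.src l = Λ.rng (x.seg 0 q) := by
      rw [rng_seg (by rw [Pi.le_def]; intro i; simp) hq, hl]; rfl
    have hcs : catSeg l x (Λ.deg l + q) = Λ.comp l (x.seg 0 q) := by rw [catSeg, hmq]
    rw [hcs, midP_comp_right hcompat hlp hpq' (by rw [← hcs]; exact hqd)]
    have e1 : Λ.deg l + p - Λ.deg l = p := by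
      funext i; simp only [Pi.add_apply, Pi.sub_apply]; omega
    have e2 : Λ.deg l + q - Λ.deg l = q := by
      funext i; simp only [Pi.add_apply, Pi.sub_apply]; omega
    rw [e1, e2]
    have h0p : (0 : Fin k → ℕ) ≤ p := by rw [Pi.le_def]; intro i; simp
    have htl := (seg_eq_headP h0p hpq hq).2
    have hp0 : p - (0 : Fin k → ℕ) = p := by funext i; simp
    rw [hp0] at htl
    rw [midP, ← htl]
    have hds : Λ.deg (x.seg p q) = q - p := x.deg_seg p q hpq hq
    have h8 := (headP_deg (x.seg p q)).1
    rw [hds] at h8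
    rw [h8]
  · show Λ.midP (catSeg l x (Λ.deg l)) 0 (Λ.deg l) = l
    have hm0 : (Λ.deg l ⊔ Λ.deg l) - Λ.deg l = 0 := by
      funext i; simp only [Pi.sub_apply, Pi.sup_apply, Pi.zero_apply]; omega
    have h00 : BValid x 0 := fun i => by simp
    have hx0 : catSeg l x (Λ.deg l) = l := by
      rw [catSeg, hm0, x.seg_self 0 h00]
      have h1 : Λ.src (x.seg 0 0) = Λ.src l := by rw [hl]; rfl
      rw [h1, Λ.comp_vertex l]
    rw [hx0, midP_zero]
    exact (headP_deg l).1

theorem isShift_concatBP (hfa : Λ.FinitelyAligned) (l : Λ.Path) (x : Λ.BoundaryPath)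
    (hl : Λ.src l = x.rng) : Λ.IsShift (Λ.deg l) (concatBP hfa l x hl) x :=
  (isConcat_concatBP hfa l x hl).1

theorem mem_ZC_concatBP (hfa : Λ.FinitelyAligned) (l : Λ.Path) (x : Λ.BoundaryPath)
    (hl : Λ.src l = x.rng) : concatBP hfa l x hl ∈ Λ.ZC l :=
  ⟨x, isConcat_concatBP hfa l x hl⟩

/-! ### Existence of boundary paths -/

/-- `μ'` extends `μ`. -/
def Extends (μ μ' : Λ.Path) : Prop := ∃ σ, Λ.src μ = Λ.rng σ ∧ μ' = Λ.comp μ σ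

theorem Extends.refl (μ : Λ.Path) : Extends μ μ :=
  ⟨Λ.vertex (Λ.src μ), (Λ.rng_vertex _).symm, (Λ.comp_vertex μ).symm⟩

theorem Extends.trans {μ μ' μ'' : Λ.Path} (h1 : Extends μ μ') (h2 : Extends μ' μ'') :
    Extends μ μ'' := by
  obtain ⟨σ, hσ, rfl⟩ := h1
  obtain ⟨σ', hσ', rfl⟩ := h2
  have hσσ' : Λ.src σ = Λ.rng σ' := by rw [← Λ.src_comp μ σ hσ]; exact hσ'
  refine ⟨Λ.comp σ σ', ?_, Λ.comp_assoc μ σ σ' hσ hσσ'⟩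
  rw [Λ.rng_comp σ σ' hσσ']; exact hσ

theorem Extends.deg_le {μ μ' : Λ.Path} (h : Extends μ μ') : Λ.deg μ ≤ Λ.deg μ' := by
  obtain ⟨σ, hσ, rfl⟩ := h
  rw [Λ.deg_comp μ σ hσ, Pi.le_def]
  intro i; simp only [Pi.add_apply]; omega

theorem Extends.midP_eq {μ μ' : Λ.Path} (h : Extends μ μ') {p q : Fin k → ℕ}
    (hpq : p ≤ q) (hq : q ≤ Λ.deg μ) : Λ.midP μ' p q = Λ.midP μ p q := by
  obtain ⟨σ, hσ, rfl⟩ := h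
  exact midP_comp_left hσ hpq hq

theorem Extends.vtxP_eq {μ μ' : Λ.Path} (h : Extends μ μ') {n : Fin k → ℕ}
    (hn : n ≤ Λ.deg μ) : Λ.vtxP μ' n = Λ.vtxP μ n := by
  obtain ⟨σ, hσ, rfl⟩ := h
  exact vtxP_comp_left hσ hn

open Classical in
/-- One step in the construction of a boundary path: extend `μ` to satisfy the
finite exhaustive set `nF.2` at position `nF.1`, if applicable. -/
noncomputable def bpStep (μ : Λ.Path) (nF : (Fin k → ℕ) × Finset Λ.Path) : Λ.Path :=
  if h : ∃ y, ∃ q ∈ (↑nF.2 : Set Λ.Path), ∃ ρτ : Λ.Path × Λ.Path,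
      ρτ ∈ Λ.minPairs (Λ.tailP μ nF.1) q ∧ y = Λ.comp μ ρτ.1 ∧ nF.1 ≤ Λ.deg μ
  then h.choose else μ

theorem bpStep_ext (μ : Λ.Path) (nF : (Fin k → ℕ) × Finset Λ.Path) :
    Extends μ (bpStep μ nF) := by
  rw [bpStep]
  split_ifs with h
  · obtain ⟨q, hq, ⟨ρ, τ⟩, hmin, hy, hn1⟩ := h.choose_spec
    exact ⟨ρ, by rw [← src_tailP hn1]; exact hmin.1, hy⟩
  · exact Extends.refl μ

theorem bpStep_sat {μ : Λ.Path} {nF : (Fin k → ℕ) × Finset Λ.Path}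
    (h1 : nF.1 ≤ Λ.deg μ) (h2 : Λ.FE (Λ.vtxP μ nF.1) ↑nF.2) :
    ∃ q ∈ (↑nF.2 : Set Λ.Path), nF.1 + Λ.deg q ≤ Λ.deg (bpStep μ nF) ∧
      Λ.midP (bpStep μ nF) nF.1 (nF.1 + Λ.deg q) = q := by
  have hrt : Λ.rng (Λ.tailP μ nF.1) = Λ.vtxP μ nF.1 := (src_headP h1).symm
  obtain ⟨q0, hq0, ⟨ρτ0, hmin0⟩⟩ := h2.2.2 (Λ.tailP μ nF.1) hrt
  have hP : ∃ y, ∃ q ∈ (↑nF.2 : Set Λ.Path), ∃ ρτ : Λ.Path × Λ.Path,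
      ρτ ∈ Λ.minPairs (Λ.tailP μ nF.1) q ∧ y = Λ.comp μ ρτ.1 ∧ nF.1 ≤ Λ.deg μ :=
    ⟨Λ.comp μ ρτ0.1, q0, hq0, ρτ0, hmin0, rfl, h1⟩
  rw [bpStep, dif_pos hP]
  obtain ⟨q, hq, ⟨ρ, τ⟩, ⟨hA, hB, hC, hD⟩, hy, -⟩ := hP.choose_spec
  dsimp only at hA hB hC hD hy
  rw [hy]
  have hμρ : Λ.src μ = Λ.rng ρ := by rw [← src_tailP h1]; exact hA
  have hre : Λ.comp μ ρ = Λ.comp (Λ.headP μ nF.1) (Λ.comp (Λ.tailP μ nF.1) ρ) := by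
    conv_lhs => rw [← comp_headP_tailP h1]
    exact Λ.comp_assoc _ _ _ (src_headP h1) hA
  have hcmp_hu : Λ.src (Λ.headP μ nF.1) = Λ.rng (Λ.comp (Λ.tailP μ nF.1) ρ) := by
    rw [Λ.rng_comp _ _ hA]; exact src_headP h1
  have hdegu : Λ.deg (Λ.comp (Λ.tailP μ nF.1) ρ) = (Λ.deg μ - nF.1) ⊔ Λ.deg q := by
    rw [hD, deg_tailP h1]
  have hdeg_all : Λ.deg (Λ.comp (Λ.headP μ nF.1) (Λ.comp (Λ.tailP μ nF.1) ρ)) =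
      nF.1 + ((Λ.deg μ - nF.1) ⊔ Λ.deg q) := by
    rw [Λ.deg_comp _ _ hcmp_hu, deg_headP h1, hdegu]
  have hbound : nF.1 + Λ.deg q ≤ Λ.deg (Λ.comp μ ρ) := by
    rw [hre, Pi.le_def]
    intro i
    have h5 := congrFun hdeg_all i
    simp only [Pi.add_apply, Pi.sub_apply, Pi.sup_apply] at h5 ⊢
    omega
  have hnn : nF.1 ≤ nF.1 + Λ.deg q := by
    rw [Pi.le_def]; intro i; simp only [Pi.add_apply]; omega
  refine ⟨q, hq, hbound, ?_⟩
  rw [hre, midP_comp_right hcmp_hu (le_of_eq (deg_headP h1)) hnn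
    (by rw [← hre]; exact hbound), deg_headP h1]
  have e1 : nF.1 - nF.1 = (0 : Fin k → ℕ) := by
    funext i; simp only [Pi.sub_apply, Pi.zero_apply]; omega
  have e2 : (nF.1 + Λ.deg q) - nF.1 = Λ.deg q := by
    funext i; simp only [Pi.add_apply, Pi.sub_apply]; omega
  rw [e1, e2, midP_zero, hC]
  exact (headP_comp hB).1

/-- The approximating sequence of paths for a boundary path based at `v`. -/
noncomputable def bpSeq (v : Λ.Obj) (e : ℕ → (Fin k → ℕ) × Finset Λ.Path) : ℕ → Λ.Path
  | 0 => Λ.vertex v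
  | j+1 => bpStep (bpSeq v e j) (e j)

theorem bpSeq_extends (v : Λ.Obj) (e : ℕ → (Fin k → ℕ) × Finset Λ.Path) {j j' : ℕ}
    (h : j ≤ j') : Extends (bpSeq v e j) (bpSeq v e j') := by
  induction j', h using Nat.le_induction with
  | base => exact Extends.refl _
  | succ j' hj ih => exact ih.trans (bpStep_ext _ _)

open Classical in
/-- The segments of the limit boundary path. -/
noncomputable def bpLimSeg (v : Λ.Obj) (e : ℕ → (Fin k → ℕ) × Finset Λ.Path)
    (p q : Fin k → ℕ) : Λ.Path :=
  if h : p ≤ q ∧ ∃ j, q ≤ Λ.deg (bpSeq v e j)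
  then Λ.midP (bpSeq v e h.2.choose) p q else Λ.vertex v

theorem bpLimSeg_eval (v : Λ.Obj) (e : ℕ → (Fin k → ℕ) × Finset Λ.Path)
    {p q : Fin k → ℕ} (j : ℕ) (hpq : p ≤ q) (hq : q ≤ Λ.deg (bpSeq v e j)) :
    bpLimSeg v e p q = Λ.midP (bpSeq v e j) p q := by
  have h : p ≤ q ∧ ∃ j, q ≤ Λ.deg (bpSeq v e j) := ⟨hpq, j, hq⟩
  rw [bpLimSeg, dif_pos h]
  have hj0 : q ≤ Λ.deg (bpSeq v e h.2.choose) := h.2.choose_spec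
  rcases le_total h.2.choose j with hle | hle
  · exact ((bpSeq_extends v e hle).midP_eq hpq hj0).symm
  · exact (bpSeq_extends v e hle).midP_eq hpq hq

theorem bpSeq_deg_mono (v : Λ.Obj) (e : ℕ → (Fin k → ℕ) × Finset Λ.Path) {j j' : ℕ}
    (h : j ≤ j') : Λ.deg (bpSeq v e j) ≤ Λ.deg (bpSeq v e j') :=
  (bpSeq_extends v e h).deg_le

theorem bpLim_valid_iff (v : Λ.Obj) (e : ℕ → (Fin k → ℕ) × Finset Λ.Path) {q : Fin k → ℕ} :
    (∀ i, (q i : ℕ∞) ≤ ⨆ j, (Λ.deg (bpSeq v e j) i : ℕ∞)) ↔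
      ∃ j, q ≤ Λ.deg (bpSeq v e j) := by
  constructor
  · intro h
    have hj : ∀ i : Fin k, ∃ j, q i ≤ Λ.deg (bpSeq v e j) i := by
      intro i
      by_contra hno
      push_neg at hno
      have hb : (⨆ j, (Λ.deg (bpSeq v e j) i : ℕ∞)) ≤ ((q i - 1 : ℕ) : ℕ∞) := by
        refine iSup_le fun j => ?_
        have h5 := hno j
        exact Nat.cast_le.mpr (by omega)
      have h2 := le_trans (h i) hb
      rw [Nat.cast_le] at h2
      have h6 := hno 0
      omega
    choose J hJ using hj
    refine ⟨Finset.univ.sup J, ?_⟩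
    rw [Pi.le_def]
    intro i
    exact le_trans (hJ i) (le_app (bpSeq_deg_mono v e (Finset.le_sup (Finset.mem_univ i))) i)
  · rintro ⟨j, hjq⟩ i
    exact le_trans (Nat.cast_le.mpr (le_app hjq i))
      (le_iSup (fun j => (Λ.deg (bpSeq v e j) i : ℕ∞)) j)

/-- The limit boundary path determined by `v` and an enumeration `e` of positions and
finite sets which attains every value at arbitrarily late times. -/
noncomputable def bpLim (v : Λ.Obj) (e : ℕ → (Fin k → ℕ) × Finset Λ.Path)
    (he : ∀ nF (j0 : ℕ), ∃ j, j0 ≤ j ∧ e j = nF) : Λ.BoundaryPath where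
  deg i := ⨆ j, (Λ.deg (bpSeq v e j) i : ℕ∞)
  seg := bpLimSeg v e
  deg_seg p q hpq hq := by
    obtain ⟨j, hj⟩ := (bpLim_valid_iff v e).mp hq
    rw [bpLimSeg_eval v e j hpq hj]
    exact deg_midP hpq hj
  seg_self p hp := by
    obtain ⟨j, hj⟩ := (bpLim_valid_iff v e).mp hp
    show bpLimSeg v e p p = Λ.vertex (Λ.src (bpLimSeg v e p p))
    rw [bpLimSeg_eval v e j le_rfl hj, midP_self hj, Λ.src_vertex]
  src_seg p q r hpq hqr hr := by
    obtain ⟨j, hj⟩ := (bpLim_valid_iff v e).mp hr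
    show Λ.src (bpLimSeg v e p q) = Λ.rng (bpLimSeg v e q r)
    rw [bpLimSeg_eval v e j hpq (le_trans hqr hj), bpLimSeg_eval v e j hqr hj]
    exact src_midP_rng hpq hqr hj
  comp_seg p q r hpq hqr hr := by
    obtain ⟨j, hj⟩ := (bpLim_valid_iff v e).mp hr
    show Λ.comp (bpLimSeg v e p q) (bpLimSeg v e q r) = bpLimSeg v e p r
    rw [bpLimSeg_eval v e j hpq (le_trans hqr hj), bpLimSeg_eval v e j hqr hj,
      bpLimSeg_eval v e j (le_trans hpq hqr) hj]
    exact comp_midP hpq hqr hj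
  boundary n hn E hE := by
    classical
    obtain ⟨j0, hj0⟩ := (bpLim_valid_iff v e).mp hn
    obtain ⟨j, hjge, hj⟩ := he (n, hE.1.toFinset) j0
    have hnj : n ≤ Λ.deg (bpSeq v e j) := le_trans hj0 (bpSeq_deg_mono v e hjge)
    have hEF : (↑hE.1.toFinset : Set Λ.Path) = E := hE.1.coe_toFinset
    have hvtx : Λ.src (bpLimSeg v e n n) = Λ.vtxP (bpSeq v e j) n := by
      rw [bpLimSeg_eval v e j le_rfl hnj, src_midP le_rfl hnj]
    have hFE2 : Λ.FE (Λ.vtxP (bpSeq v e j) (n, hE.1.toFinset).1)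
        ↑(n, hE.1.toFinset).2 := by
      dsimp only
      rw [hEF, ← hvtx]
      exact hE
    obtain ⟨q, hq, hqd, hqm⟩ := bpStep_sat (μ := bpSeq v e j)
      (nF := (n, hE.1.toFinset)) hnj hFE2
    dsimp only at hq hqd hqm
    rw [← hj] at hqd hqm
    have hstep : bpStep (bpSeq v e j) (e j) = bpSeq v e (j+1) := rfl
    rw [hstep] at hqd hqm
    have hnn : n ≤ n + Λ.deg q := by
      rw [Pi.le_def]; intro i; simp only [Pi.add_apply]; omega
    refine ⟨q, by rw [← hEF]; exact hq, ?_, ?_⟩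
    · intro i
      exact le_trans (Nat.cast_le.mpr (le_app hqd i))
        (le_iSup (fun j => (Λ.deg (bpSeq v e j) i : ℕ∞)) (j+1))
    · show bpLimSeg v e n (n + Λ.deg q) = q
      rw [bpLimSeg_eval v e (j+1) hnn hqd]
      exact hqm

theorem bpLim_rng (v : Λ.Obj) (e : ℕ → (Fin k → ℕ) × Finset Λ.Path)
    (he : ∀ nF (j0 : ℕ), ∃ j, j0 ≤ j ∧ e j = nF) : (bpLim v e he).rng = v := by
  show Λ.src (bpLimSeg v e 0 0) = v
  have h0 : (0 : Fin k → ℕ) ≤ Λ.deg (bpSeq v e 0) := by rw [Pi.le_def]; intro i; simp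
  rw [bpLimSeg_eval v e 0 le_rfl h0, src_midP le_rfl h0]
  show Λ.src (Λ.headP (Λ.vertex v) 0) = v
  rw [(headP_zero (Λ.vertex v)).1, Λ.src_vertex, Λ.rng_vertex]

/-- Every vertex receives a boundary path. -/
theorem exists_boundaryPath (v : Λ.Obj) : ∃ x : Λ.BoundaryPath, x.rng = v := by
  haveI := Λ.countable_path
  have hne : Nonempty ((Fin k → ℕ) × Finset Λ.Path) := ⟨(0, ∅)⟩
  obtain ⟨g, hg⟩ := exists_surjective_nat ((Fin k → ℕ) × Finset Λ.Path)
  have he : ∀ nF (j0 : ℕ), ∃ j, j0 ≤ j ∧ (fun j => g (Nat.unpair j).2) j = nF := by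
    intro nF j0
    obtain ⟨m, hm⟩ := hg nF
    refine ⟨Nat.pair j0 m, Nat.left_le_pair j0 m, ?_⟩
    simp only [Nat.unpair_pair]
    exact hm
  exact ⟨bpLim v (fun j => g (Nat.unpair j).2) he, bpLim_rng v _ he⟩

/-! ### The escape lemma -/

theorem bvalid_sup {z : Λ.BoundaryPath} {a b : Fin k → ℕ} (ha : BValid z a)
    (hb : BValid z b) : BValid z (a ⊔ b) := by
  intro i
  have h1 : (a ⊔ b) i = max (a i) (b i) := rfl
  rw [h1]
  rcases le_total (a i) (b i) with h | h
  · rw [max_eq_right h]; exact hb i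
  · rw [max_eq_left h]; exact ha i

theorem foldr_sup_le (L : List (Λ.Path × Set Λ.Path)) :
    ∀ pg ∈ L, Λ.deg pg.1 ≤ L.foldr (fun pg acc => Λ.deg pg.1 ⊔ acc) 0 := by
  induction L with
  | nil => intro pg h; simp at h
  | cons a L ih =>
      intro pg h
      rcases List.mem_cons.mp h with rfl | h
      · exact le_sup_left
      · exact le_trans (ih pg h) le_sup_right

theorem foldr_sup_bvalid (w : Λ.BoundaryPath) (L : List (Λ.Path × Set Λ.Path))
    (h : ∀ pg ∈ L, w ∈ Λ.ZC pg.1) :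
    BValid w (L.foldr (fun pg acc => Λ.deg pg.1 ⊔ acc) 0) := by
  induction L with
  | nil => intro i; simp
  | cons a L ih =>
      have h2 := ih (fun pg hpg => h pg (List.mem_cons_of_mem a hpg))
      have h1 := (mem_ZC_iff.mp (h a (List.mem_cons_self))).1
      exact bvalid_sup h1 h2

/-- Given a boundary path `w` in each basic set `Z(p \ G)` of a finite list, there is a
single path `ξ` with range `r(w)` such that every boundary path in `Z(ξ)` lies in all of
the sets `Z(p \ G)`. -/
theorem escape_lemma (hfa : Λ.FinitelyAligned) (w : Λ.BoundaryPath)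
    (L : List (Λ.Path × Set Λ.Path))
    (hw : ∀ pg ∈ L, w ∈ Λ.ZC pg.1)
    (hfin : ∀ pg ∈ L, Set.Finite pg.2)
    (hrng : ∀ pg ∈ L, ∀ ν ∈ pg.2, Λ.rng ν = Λ.src pg.1)
    (havoid : ∀ pg ∈ L, ∀ ν ∈ pg.2, w ∉ Λ.ZC (Λ.comp pg.1 ν)) :
    ∃ ξ : Λ.Path, Λ.rng ξ = w.rng ∧
      ∀ z : Λ.BoundaryPath, z ∈ Λ.ZC ξ →
        ∀ pg ∈ L, z ∈ Λ.ZC pg.1 ∧ ∀ ν ∈ pg.2, z ∉ Λ.ZC (Λ.comp pg.1 ν) := by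
  classical
  set N := L.foldr (fun pg acc => Λ.deg pg.1 ⊔ acc) (0 : Fin k → ℕ) with hN
  have hNle : ∀ pg ∈ L, Λ.deg pg.1 ≤ N := foldr_sup_le L
  have hNval : BValid w N := foldr_sup_bvalid w L hw
  have h0N : (0 : Fin k → ℕ) ≤ N := by rw [Pi.le_def]; intro i; simp
  have hdP : Λ.deg (w.seg 0 N) = N := by
    rw [w.deg_seg 0 N h0N hNval]; funext i; simp
  have hwP : w ∈ Λ.ZC (w.seg 0 N) := by
    rw [mem_ZC_iff, hdP]
    exact ⟨hNval, rfl⟩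
  have hsrcP : Λ.src (w.seg 0 N) = Λ.src (w.seg N N) := src_seg' h0N hNval
  -- the derived finite set H
  set H := {ρ | ∃ pg ∈ L, ∃ ν ∈ pg.2, ∃ t,
    (ρ, t) ∈ Λ.minPairs (w.seg 0 N) (Λ.comp pg.1 ν)} with hH
  have hHfin : H.Finite := by
    have hbig : (⋃ pg ∈ {x | x ∈ L}, ⋃ ν ∈ pg.2,
        Prod.fst '' Λ.minPairs (w.seg 0 N) (Λ.comp pg.1 ν)).Finite :=
      Set.Finite.biUnion (List.finite_toSet L)
        (fun pg hpg => Set.Finite.biUnion (hfin pg hpg)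
          (fun ν _ => Set.Finite.image Prod.fst (hfa _ _)))
    refine hbig.subset ?_
    rintro ρ ⟨pg, hpg, ν, hν, t, ht⟩
    exact Set.mem_biUnion hpg (Set.mem_biUnion hν ⟨(ρ, t), ht, rfl⟩)
  have hHrng : ∀ ρ ∈ H, Λ.rng ρ = Λ.src (w.seg 0 N) := by
    rintro ρ ⟨pg, hpg, ν, hν, t, ht⟩
    exact ht.1.symm
  have hHnv : ∀ ρ ∈ H, ρ ≠ Λ.vertex (Λ.src (w.seg 0 N)) := by
    rintro ρ ⟨pg, hpg, ν, hν, t, ht⟩ hveq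
    have h1 : Λ.comp (w.seg 0 N) ρ = w.seg 0 N := by
      rw [hveq, Λ.comp_vertex]
    have h2 : w.seg 0 N = Λ.comp (Λ.comp pg.1 ν) t := by rw [← h1, ht.2.2.1]
    refine havoid pg hpg ν hν ?_
    have h3 : w ∈ Λ.ZC (Λ.comp (Λ.comp pg.1 ν) t) := by rw [← h2]; exact hwP
    exact mem_ZC_comp ht.2.1 h3
  by_cases hex : Λ.Exhaustive (Λ.src (w.seg N N)) H
  · exfalso
    have hFE : Λ.FE (Λ.src (w.seg N N)) H :=
      ⟨hHfin, fun ρ hρ => ⟨(hHrng ρ hρ).trans hsrcP, by rw [← hsrcP]; exact hHnv ρ hρ⟩, hex⟩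
    obtain ⟨ρ, hρH, hval, hseg⟩ := w.boundary N hNval H hFE
    obtain ⟨pg, hpg, ν, hν, t, hmin⟩ := hρH
    have hcPρ : Λ.src (w.seg 0 N) = Λ.rng ρ := hmin.1
    have hwPρ : w ∈ Λ.ZC (Λ.comp (w.seg 0 N) ρ) := by
      rw [mem_ZC_iff]
      have hdd : Λ.deg (Λ.comp (w.seg 0 N) ρ) = N + Λ.deg ρ := by
        rw [Λ.deg_comp _ _ hcPρ, hdP]
      rw [hdd]
      refine ⟨hval, ?_⟩
      rw [← w.comp_seg 0 N (N + Λ.deg ρ) h0N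
        (by rw [Pi.le_def]; intro i; simp only [Pi.add_apply]; omega) hval, hseg]
    have h2 : Λ.comp (w.seg 0 N) ρ = Λ.comp (Λ.comp pg.1 ν) t := hmin.2.2.1
    rw [h2] at hwPρ
    exact havoid pg hpg ν hν (mem_ZC_comp hmin.2.1 hwPρ)
  · rw [Exhaustive] at hex
    push_neg at hex
    obtain ⟨τ, hτrng, hτ⟩ := hex
    have hPτ : Λ.src (w.seg 0 N) = Λ.rng τ := by rw [hsrcP, hτrng]
    refine ⟨Λ.comp (w.seg 0 N) τ, ?_, ?_⟩
    · rw [Λ.rng_comp _ _ hPτ, rng_seg h0N hNval]; rfl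
    intro z hzξ pg hpg
    have hzP : z ∈ Λ.ZC (w.seg 0 N) := mem_ZC_comp hPτ hzξ
    obtain ⟨hzPval, hzPseg⟩ := mem_ZC_iff.mp hzP
    have hzPval' : BValid z N := by intro i; have := hzPval i; rw [hdP] at this; exact this
    have hzPseg' : z.seg 0 N = w.seg 0 N := by
      have := hzPseg; rw [hdP] at this; exact this
    have hsplitp := w.comp_seg 0 (Λ.deg pg.1) N
      (by rw [Pi.le_def]; intro i; simp) (hNle pg hpg) hNval
    have hpgP : w.seg 0 N = Λ.comp pg.1 (w.seg (Λ.deg pg.1) N) := by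
      rw [← hsplitp, (mem_ZC_iff.mp (hw pg hpg)).2]
    have hcpg : Λ.src pg.1 = Λ.rng (w.seg (Λ.deg pg.1) N) := by
      rw [rng_seg (hNle pg hpg) hNval]
      conv_lhs => rw [← (mem_ZC_iff.mp (hw pg hpg)).2]
      exact src_seg' (by rw [Pi.le_def]; intro i; simp) (hNval.mono (hNle pg hpg))
    have hzpg : z ∈ Λ.ZC pg.1 := by
      rw [hpgP] at hzP
      exact mem_ZC_comp hcpg hzP
    refine ⟨hzpg, ?_⟩
    intro ν hν hcontra
    -- construct an element of H from the common extension inside z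
    obtain ⟨hzνval, hzνseg⟩ := mem_ZC_iff.mp hcontra
    have hDval : BValid z (N ⊔ Λ.deg (Λ.comp pg.1 ν)) := bvalid_sup hzPval' hzνval
    have hND : N ≤ N ⊔ Λ.deg (Λ.comp pg.1 ν) := le_sup_left
    have hνD : Λ.deg (Λ.comp pg.1 ν) ≤ N ⊔ Λ.deg (Λ.comp pg.1 ν) := le_sup_right
    have h0ν : (0 : Fin k → ℕ) ≤ Λ.deg (Λ.comp pg.1 ν) := by rw [Pi.le_def]; intro i; simp
    have hzρcomp : Λ.comp (z.seg 0 N) (z.seg N (N ⊔ Λ.deg (Λ.comp pg.1 ν))) =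
        z.seg 0 (N ⊔ Λ.deg (Λ.comp pg.1 ν)) := z.comp_seg 0 N _ h0N hND hDval
    have hzνcomp : Λ.comp (z.seg 0 (Λ.deg (Λ.comp pg.1 ν)))
        (z.seg (Λ.deg (Λ.comp pg.1 ν)) (N ⊔ Λ.deg (Λ.comp pg.1 ν))) =
        z.seg 0 (N ⊔ Λ.deg (Λ.comp pg.1 ν)) := z.comp_seg 0 _ _ h0ν hνD hDval
    have hzeq : Λ.comp (w.seg 0 N) (z.seg N (N ⊔ Λ.deg (Λ.comp pg.1 ν))) =
        z.seg 0 (N ⊔ Λ.deg (Λ.comp pg.1 ν)) := by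
      rw [← hzPseg']; exact hzρcomp
    have hρ0mem : (z.seg N (N ⊔ Λ.deg (Λ.comp pg.1 ν)),
        z.seg (Λ.deg (Λ.comp pg.1 ν)) (N ⊔ Λ.deg (Λ.comp pg.1 ν))) ∈
        Λ.minPairs (w.seg 0 N) (Λ.comp pg.1 ν) := by
      refine ⟨?_, ?_, ?_, ?_⟩
      · rw [← hzPseg', src_seg' h0N hzPval', rng_seg hND hDval]
      · rw [rng_seg hνD hDval]
        conv_lhs => rw [← hzνseg]
        exact src_seg' h0ν hzνval
      · calc Λ.comp (w.seg 0 N) (z.seg N (N ⊔ Λ.deg (Λ.comp pg.1 ν)))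
            = z.seg 0 (N ⊔ Λ.deg (Λ.comp pg.1 ν)) := hzeq
          _ = Λ.comp (z.seg 0 (Λ.deg (Λ.comp pg.1 ν)))
              (z.seg (Λ.deg (Λ.comp pg.1 ν)) (N ⊔ Λ.deg (Λ.comp pg.1 ν))) := hzνcomp.symm
          _ = Λ.comp (Λ.comp pg.1 ν)
              (z.seg (Λ.deg (Λ.comp pg.1 ν)) (N ⊔ Λ.deg (Λ.comp pg.1 ν))) := by
            rw [hzνseg]
      · rw [hzeq, z.deg_seg 0 _ (le_trans h0N hND) hDval, hdP]
        funext i; simp only [Pi.sub_apply, Pi.zero_apply]; omega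
    have hρ0H : z.seg N (N ⊔ Λ.deg (Λ.comp pg.1 ν)) ∈ H :=
      ⟨pg, hpg, ν, hν, _, hρ0mem⟩
    -- z also extends τ at position N
    obtain ⟨hzξval, hzξseg⟩ := mem_ZC_iff.mp hzξ
    have hdξ : Λ.deg (Λ.comp (w.seg 0 N) τ) = N + Λ.deg τ := by
      rw [Λ.deg_comp _ _ hPτ, hdP]
    have hzξval' : BValid z (N + Λ.deg τ) := by
      intro i; have := hzξval i; rw [hdξ] at this; exact this
    have hNτ : N ≤ N + Λ.deg τ := by
      rw [Pi.le_def]; intro i; simp only [Pi.add_apply]; omega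
    have hzτ : z.seg N (N + Λ.deg τ) = τ := by
      have hNt0 : N ≤ Λ.deg (Λ.comp (w.seg 0 N) τ) := by
        rw [hdξ, Pi.le_def]; intro i; simp only [Pi.add_apply]; omega
      have hdz0N : Λ.deg (z.seg 0 N) = N := by
        rw [z.deg_seg 0 N h0N hzPval']; funext i; simp
      have hcompz : Λ.comp (z.seg 0 N) (z.seg N (N + Λ.deg τ)) = Λ.comp (w.seg 0 N) τ := by
        rw [z.comp_seg 0 N (N + Λ.deg τ) h0N hNτ hzξval']
        have h9 := hzξseg; rw [hdξ] at h9; exact h9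
      have h1 := split_unique hNt0 (z.src_seg 0 N (N + Λ.deg τ) h0N hNτ hzξval')
        hdz0N hcompz
      have h2 := split_unique hNt0 hPτ hdP rfl
      rw [h1.2, ← h2.2]
    have hMval : BValid z ((N ⊔ Λ.deg (Λ.comp pg.1 ν)) ⊔ (N + Λ.deg τ)) :=
      bvalid_sup hDval hzξval'
    have hAle : N + Λ.deg τ ≤ (N ⊔ Λ.deg (Λ.comp pg.1 ν)) ⊔ (N + Λ.deg τ) := le_sup_right
    have hBle : N ⊔ Λ.deg (Λ.comp pg.1 ν) ≤
        (N ⊔ Λ.deg (Λ.comp pg.1 ν)) ⊔ (N + Λ.deg τ) := le_sup_left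
    have hpa : Λ.src τ =
        Λ.rng (z.seg (N + Λ.deg τ) ((N ⊔ Λ.deg (Λ.comp pg.1 ν)) ⊔ (N + Λ.deg τ))) := by
      rw [rng_seg hAle hMval]
      conv_lhs => rw [← hzτ]
      exact src_seg' hNτ hzξval' 
    have hqb : Λ.src (z.seg N (N ⊔ Λ.deg (Λ.comp pg.1 ν))) =
        Λ.rng (z.seg (N ⊔ Λ.deg (Λ.comp pg.1 ν))
          ((N ⊔ Λ.deg (Λ.comp pg.1 ν)) ⊔ (N + Λ.deg τ))) := by
      rw [src_seg' hND hDval, rng_seg hBle hMval]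
    have hcommon : Λ.comp τ
        (z.seg (N + Λ.deg τ) ((N ⊔ Λ.deg (Λ.comp pg.1 ν)) ⊔ (N + Λ.deg τ))) =
        Λ.comp (z.seg N (N ⊔ Λ.deg (Λ.comp pg.1 ν)))
          (z.seg (N ⊔ Λ.deg (Λ.comp pg.1 ν))
            ((N ⊔ Λ.deg (Λ.comp pg.1 ν)) ⊔ (N + Λ.deg τ))) := by
      calc Λ.comp τ (z.seg (N + Λ.deg τ) ((N ⊔ Λ.deg (Λ.comp pg.1 ν)) ⊔ (N + Λ.deg τ)))
          = Λ.comp (z.seg N (N + Λ.deg τ))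
            (z.seg (N + Λ.deg τ) ((N ⊔ Λ.deg (Λ.comp pg.1 ν)) ⊔ (N + Λ.deg τ))) := by
            rw [hzτ]
        _ = z.seg N ((N ⊔ Λ.deg (Λ.comp pg.1 ν)) ⊔ (N + Λ.deg τ)) :=
            z.comp_seg N (N + Λ.deg τ) _ hNτ hAle hMval
        _ = Λ.comp (z.seg N (N ⊔ Λ.deg (Λ.comp pg.1 ν)))
            (z.seg (N ⊔ Λ.deg (Λ.comp pg.1 ν))
              ((N ⊔ Λ.deg (Λ.comp pg.1 ν)) ⊔ (N + Λ.deg τ))) :=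
            (z.comp_seg N (N ⊔ Λ.deg (Λ.comp pg.1 ν)) _ hND hBle hMval).symm
    have hne := minPairs_nonempty_of_commonExt hpa hqb hcommon
    rw [hτ _ hρ0H] at hne
    exact Set.not_nonempty_empty hne

/-! ### Groupoid helpers -/

theorem unitOf_eq {a : Λ.bpSpace} (ha : a ∈ Λ.unitSet) : Λ.unitOf a.1.1 = a := by
  obtain ⟨h1, h2⟩ := ha
  apply Subtype.ext
  show (a.1.1, (0 : Fin k → ℤ), a.1.1) = a.1
  rw [Prod.ext_iff]
  exact ⟨rfl, by rw [Prod.ext_iff]; exact ⟨h1.symm, h2⟩⟩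

theorem unitOf_mem_unitSet (x : Λ.BoundaryPath) : Λ.unitOf x ∈ Λ.unitSet := ⟨rfl, rfl⟩

theorem unitOf_mem_ZP {p : Λ.Path} {x : Λ.BoundaryPath} (hx : x ∈ Λ.ZC p) :
    ((x, (0 : Fin k → ℤ), x) : Λ.BoundaryPath × (Fin k → ℤ) × Λ.BoundaryPath) ∈
      Λ.ZP p p := by
  obtain ⟨z, hz⟩ := hx
  exact ⟨by funext i; simp, ⟨z, hz⟩, ⟨z, hz⟩, z, hz.1, hz.1⟩

theorem unit_mem_ZP_elim {p q : Λ.Path} {x : Λ.BoundaryPath}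
    (h : ((x, (0 : Fin k → ℤ), x) : Λ.BoundaryPath × (Fin k → ℤ) × Λ.BoundaryPath) ∈
      Λ.ZP p q) : p = q ∧ x ∈ Λ.ZC p := by
  obtain ⟨h0, hzp, hzq, -⟩ := h
  have hdeg : Λ.deg p = Λ.deg q := by
    funext i
    have h1 := congrFun h0 i
    simp only [Pi.zero_apply] at h1
    omega
  obtain ⟨hle1, hs1⟩ := mem_ZC_iff.mp hzp
  obtain ⟨hle2, hs2⟩ := mem_ZC_iff.mp hzq
  refine ⟨?_, hzp⟩
  rw [← hs1, ← hs2, hdeg]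

theorem generateOpen_elim {X : Type} {S : Set (Set X)} {W : Set X}
    (hW : TopologicalSpace.GenerateOpen S W) :
    ∀ x ∈ W, ∃ L : List (Set X), (∀ U ∈ L, U ∈ S) ∧ (∀ U ∈ L, x ∈ U) ∧
      ∀ y : X, (∀ U ∈ L, y ∈ U) → y ∈ W := by
  induction hW with
  | basic U hU =>
      intro x hx
      exact ⟨[U], by simp [hU], by simp [hx], fun y hy => hy U (by simp)⟩
  | univ => intro x _; exact ⟨[], by simp, by simp, fun y _ => trivial⟩
  | inter U V hU hV ihU ihV =>
      intro x hx
      obtain ⟨L1, ha1, ha2, ha3⟩ := ihU x hx.1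
      obtain ⟨L2, hb1, hb2, hb3⟩ := ihV x hx.2
      refine ⟨L1 ++ L2, ?_, ?_, ?_⟩
      · intro U' hU'
        rcases List.mem_append.mp hU' with h | h
        exacts [ha1 U' h, hb1 U' h]
      · intro U' hU'
        rcases List.mem_append.mp hU' with h | h
        exacts [ha2 U' h, hb2 U' h]
      · intro y hy
        exact ⟨ha3 y (fun U' hU' => hy U' (List.mem_append.mpr (Or.inl hU'))),
          hb3 y (fun U' hU' => hy U' (List.mem_append.mpr (Or.inr hU')))⟩
  | sUnion S' hS' ih =>
      intro x hx
      obtain ⟨t, ht, hxt⟩ := hx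
      obtain ⟨L, h1, h2, h3⟩ := ih t ht x hxt
      exact ⟨L, h1, h2, fun y hy => ⟨t, ht, h3 y hy⟩⟩

theorem list_extract (w : Λ.BoundaryPath) (L : List (Set Λ.bpSpace))
    (hS : ∀ U ∈ L, ∃ (p q : Λ.Path) (G : Set Λ.Path), Λ.src p = Λ.src q ∧
      (∀ ν ∈ G, Λ.rng ν = Λ.src p) ∧ G.Finite ∧
      U = Subtype.val ⁻¹' Λ.ZPD p q G)
    (hw : ∀ U ∈ L, Λ.unitOf w ∈ U) :
    ∃ L' : List (Λ.Path × Set Λ.Path),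
      (∀ pg ∈ L', w ∈ Λ.ZC pg.1) ∧ (∀ pg ∈ L', pg.2.Finite) ∧
      (∀ pg ∈ L', ∀ ν ∈ pg.2, Λ.rng ν = Λ.src pg.1) ∧
      (∀ pg ∈ L', ∀ ν ∈ pg.2, w ∉ Λ.ZC (Λ.comp pg.1 ν)) ∧
      ∀ z : Λ.BoundaryPath,
        (∀ pg ∈ L', z ∈ Λ.ZC pg.1 ∧ ∀ ν ∈ pg.2, z ∉ Λ.ZC (Λ.comp pg.1 ν)) →
        ∀ U ∈ L, Λ.unitOf z ∈ U := by
  induction L with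
  | nil =>
      exact ⟨[], by simp, by simp, by simp, by simp, fun z _ U hU => by simp at hU⟩
  | cons U0 L ih =>
      obtain ⟨L', h1, h2, h3, h4, h5⟩ := ih (fun U hU => hS U (List.mem_cons_of_mem _ hU))
        (fun U hU => hw U (List.mem_cons_of_mem _ hU))
      obtain ⟨p, q, G, hpq, hG, hGfin, hU0⟩ := hS U0 (List.mem_cons_self)
      have hw0 : Λ.unitOf w ∈ U0 := hw U0 (List.mem_cons_self)
      rw [hU0] at hw0
      obtain ⟨hwzp, hwnot⟩ := hw0
      obtain ⟨hpeq, hwp⟩ := unit_mem_ZP_elim hwzp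
      subst hpeq
      have hwav : ∀ ν ∈ G, w ∉ Λ.ZC (Λ.comp p ν) := by
        intro ν hν hmem
        exact hwnot (Set.mem_biUnion hν (unitOf_mem_ZP hmem))
      refine ⟨(p, G) :: L', ?_, ?_, ?_, ?_, ?_⟩
      · intro pg hpg
        rcases List.mem_cons.mp hpg with rfl | h
        exacts [hwp, h1 pg h]
      · intro pg hpg
        rcases List.mem_cons.mp hpg with rfl | h
        exacts [hGfin, h2 pg h]
      · intro pg hpg
        rcases List.mem_cons.mp hpg with rfl | h
        exacts [hG, h3 pg h]
      · intro pg hpg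
        rcases List.mem_cons.mp hpg with rfl | h
        exacts [hwav, h4 pg h]
      · intro z hz U hU
        rcases List.mem_cons.mp hU with rfl | h
        · rw [hU0]
          have hz0 := hz (p, G) (List.mem_cons_self)
          refine ⟨unitOf_mem_ZP hz0.1, ?_⟩
          intro hmem
          rw [Set.mem_iUnion₂] at hmem
          obtain ⟨ν, hν, hmem⟩ := hmem
          exact hz0.2 ν hν hmem.2.1
        · exact h5 z (fun pg hpg => hz pg (List.mem_cons_of_mem _ hpg)) U h

end KGraph

/-- `Λ` is cofinal iff the boundary-path groupoid `G_Λ` is minimal,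
i.e. the unit space has no nontrivial relatively open invariant subsets. -/
theorem cofinal_iff_minimal {k : ℕ} (hk : 0 < k) (Λ : KGraph k)
    (hΛ : Λ.FinitelyAligned) :
    Λ.Cofinal ↔
      ∀ V : Set Λ.bpSpace, V ⊆ Λ.unitSet →
        (∃ W, @IsOpen _ Λ.bpTop W ∧ V = W ∩ Λ.unitSet) →
        (∀ a : Λ.bpSpace, Λ.unitOf a.1.2.2 ∈ V → Λ.unitOf a.1.1 ∈ V) →
        V = ∅ ∨ V = Λ.unitSet := by
  classical
  constructor
  · -- cofinal → minimal
    intro hc V hVsub ⟨W, hWopen, hVW⟩ hinv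
    rcases eq_or_ne V ∅ with hVe | hVne
    · exact Or.inl hVe
    right
    obtain ⟨a₀, ha₀⟩ := Set.nonempty_iff_ne_empty.mpr hVne
    refine Set.Subset.antisymm hVsub ?_
    intro b hb
    set w := a₀.1.1 with hwdef
    have ha₀W : a₀ ∈ W := by
      rw [hVW] at ha₀; exact ha₀.1
    have ha₀u : a₀ ∈ Λ.unitSet := hVsub ha₀
    have ha₀eq : Λ.unitOf w = a₀ := KGraph.unitOf_eq ha₀u
    have hgen : TopologicalSpace.GenerateOpen
        {V | ∃ (p q : Λ.Path) (G : Set Λ.Path), Λ.src p = Λ.src q ∧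
          (∀ ν ∈ G, Λ.rng ν = Λ.src p) ∧ G.Finite ∧
          V = Subtype.val ⁻¹' Λ.ZPD p q G} W := hWopen
    obtain ⟨L, hL1, hL2, hL3⟩ := KGraph.generateOpen_elim hgen a₀ ha₀W
    have hL2' : ∀ U ∈ L, Λ.unitOf w ∈ U := by
      intro U hU; rw [ha₀eq]; exact hL2 U hU
    obtain ⟨L', hw1, hw2, hw3, hw4, hw5⟩ := KGraph.list_extract w L hL1 hL2'
    obtain ⟨ξ, hξrng, hesc⟩ := KGraph.escape_lemma hΛ w L' hw1 hw2 hw3 hw4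
    -- target unit
    set y := b.1.1 with hydef
    obtain ⟨n, hn, p, hpr, hps⟩ := hc (Λ.src ξ) y
    set y' := KGraph.shiftBP y n hn with hy'def
    have hn0 : n + (0 : Fin k → ℕ) = n := by funext i; simp
    have hy'rng : y'.rng = Λ.src (y.seg n n) := by
      show Λ.src (y.seg (n + 0) (n + 0)) = Λ.src (y.seg n n)
      rw [hn0]
    have hcomp : Λ.src (Λ.comp ξ p) = y'.rng := by
      rw [hy'rng, Λ.src_comp ξ p hpr.symm, hps]; rfl
    set z := KGraph.concatBP hΛ (Λ.comp ξ p) y' hcomp with hzdef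
    have hzξp : z ∈ Λ.ZC (Λ.comp ξ p) := KGraph.mem_ZC_concatBP hΛ _ y' hcomp
    have hzξ : z ∈ Λ.ZC ξ := KGraph.mem_ZC_comp hpr.symm hzξp
    have hzW : Λ.unitOf z ∈ W :=
      hL3 _ (hw5 z (fun pg hpg => hesc z hzξ pg hpg) )
    have hzV : Λ.unitOf z ∈ V := by
      rw [hVW]; exact ⟨hzW, KGraph.unitOf_mem_unitSet z⟩
    -- the groupoid element from y to z
    have hmem : ((y, fun i => (n i : ℤ) - (Λ.deg (Λ.comp ξ p) i : ℤ), z) :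
        Λ.BoundaryPath × (Fin k → ℤ) × Λ.BoundaryPath) ∈ Λ.BPG :=
      ⟨n, Λ.deg (Λ.comp ξ p), y', rfl, KGraph.isShift_shiftBP y n hn,
        KGraph.isShift_concatBP hΛ _ y' hcomp⟩
    have hby := hinv ⟨(y, fun i => (n i : ℤ) - (Λ.deg (Λ.comp ξ p) i : ℤ), z), hmem⟩ hzV
    rw [← KGraph.unitOf_eq hb]
    exact hby
  · -- minimal → cofinal
    intro hmin v x
    set V : Set Λ.bpSpace := {a | a ∈ Λ.unitSet ∧ ∃ n : Fin k → ℕ,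
      (∀ i, (n i : ℕ∞) ≤ a.1.1.deg i) ∧
      ∃ p, Λ.rng p = v ∧ Λ.src p = a.1.1.vtx n} with hVdef
    have hVsub : V ⊆ Λ.unitSet := fun a ha => ha.1
    -- V is relatively open
    have hVopen : ∃ W, @IsOpen _ Λ.bpTop W ∧ V = W ∩ Λ.unitSet := by
      refine ⟨⋃ P ∈ {P : Λ.Path | ∃ p, Λ.rng p = v ∧ Λ.src p = Λ.src P},
        (Subtype.val ⁻¹' Λ.ZPD P P ∅ : Set Λ.bpSpace), ?_, ?_⟩
      · letI := Λ.bpTop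
        refine isOpen_biUnion ?_
        intro P hP
        exact TopologicalSpace.GenerateOpen.basic _
          ⟨P, P, ∅, rfl, by simp, Set.finite_empty, rfl⟩
      · apply Set.Subset.antisymm
        · rintro a ⟨hau, n, hn, p, hpv, hps⟩
          refine ⟨?_, hau⟩
          have h0n : (0 : Fin k → ℕ) ≤ n := by rw [Pi.le_def]; intro i; simp
          set y := a.1.1 with hy
          have hdseg : Λ.deg (y.seg 0 n) = n := by
            rw [y.deg_seg 0 n h0n hn]; funext i; simp
          have hsrcseg : Λ.src (y.seg 0 n) = y.vtx n := KGraph.src_seg' h0n hn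
          refine Set.mem_biUnion (x := y.seg 0 n)
            ⟨p, hpv, hps.trans hsrcseg.symm⟩ ?_
          show a.1 ∈ Λ.ZPD (y.seg 0 n) (y.seg 0 n) ∅
          have hyZC : y ∈ Λ.ZC (y.seg 0 n) := by
            rw [KGraph.mem_ZC_iff, hdseg]
            exact ⟨hn, rfl⟩
          have haeq : a.1 = (y, (0 : Fin k → ℤ), y) := by
            rw [Prod.ext_iff]
            exact ⟨rfl, by rw [Prod.ext_iff]; exact ⟨hau.1, hau.2.symm⟩⟩
          rw [haeq]
          exact ⟨KGraph.unitOf_mem_ZP hyZC, by simp⟩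
        · rintro a ⟨haW, hau⟩
          rw [Set.mem_iUnion₂] at haW
          obtain ⟨P, ⟨p, hpv, hpP⟩, haP⟩ := haW
          obtain ⟨haZP, -⟩ := haP
          refine ⟨hau, Λ.deg P, ?_, p, hpv, ?_⟩
          · -- validity
            have h1 : a.1.1 ∈ Λ.ZC P := haZP.2.1
            exact (KGraph.mem_ZC_iff.mp h1).1
          · have h1 : a.1.1 ∈ Λ.ZC P := haZP.2.1
            obtain ⟨hval, hseg⟩ := KGraph.mem_ZC_iff.mp h1
            have h0P : (0 : Fin k → ℕ) ≤ Λ.deg P := by rw [Pi.le_def]; intro i; simp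
            rw [hpP]
            conv_lhs => rw [← hseg]
            exact KGraph.src_seg' h0P hval
    -- V is invariant
    have hVinv : ∀ a : Λ.bpSpace, Λ.unitOf a.1.2.2 ∈ V → Λ.unitOf a.1.1 ∈ V := by
      intro a ha
      obtain ⟨-, n, hn0, ρ, hρv, hρs0⟩ := ha
      obtain ⟨pp, qq, z₀, -, hsh1, hsh2⟩ := a.2
      set y₁ := a.1.1 with hy₁
      set y₂ := a.1.2.2 with hy₂
      have hn : ∀ i, (n i : ℕ∞) ≤ y₂.deg i := hn0
      have hρs : Λ.src ρ = y₂.vtx n := hρs0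
      refine ⟨KGraph.unitOf_mem_unitSet y₁, pp + ((n ⊔ qq) - qq), ?_, ?_⟩
      · -- validity
        intro i
        have hq2 : (qq i : ℕ∞) ≤ y₂.deg i := hsh2.1 i
        have hp1 : (pp i : ℕ∞) ≤ y₁.deg i := hsh1.1 i
        have hnq : ((n ⊔ qq) i : ℕ∞) ≤ y₂.deg i := KGraph.bvalid_sup hn hsh2.1 i
        have hm2 : (((n ⊔ qq) - qq) i : ℕ∞) ≤ z₀.deg i := by
          rw [hsh2.2.1 i]
          have hsplit : ((n ⊔ qq) i : ℕ) = qq i + ((n ⊔ qq) - qq) i := by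
            simp only [Pi.sub_apply, Pi.sup_apply]; omega
          rw [KGraph.enat_coe_le_sub (hsh2.1 i), ← hsplit]
          exact hnq
        rw [hsh1.2.1 i] at hm2
        have := (KGraph.enat_coe_le_sub (hsh1.1 i)).mp hm2
        exact this
      · -- the connecting path
        have hnle : n ≤ n ⊔ qq := le_sup_left
        have hqle : qq ≤ n ⊔ qq := le_sup_right
        have hnqval : ∀ i, ((n ⊔ qq) i : ℕ∞) ≤ y₂.deg i := KGraph.bvalid_sup hn hsh2.1
        have hcomp : Λ.src ρ = Λ.rng (y₂.seg n (n ⊔ qq)) := by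
          rw [KGraph.rng_seg hnle hnqval, hρs]
        refine ⟨Λ.comp ρ (y₂.seg n (n ⊔ qq)), by rw [Λ.rng_comp _ _ hcomp, hρv], ?_⟩
        rw [Λ.src_comp _ _ hcomp, KGraph.src_seg' hnle hnqval]
        -- y₂.vtx (n ⊔ qq) = y₁.vtx (pp + ((n ⊔ qq) - qq))
        have hmval : ∀ i, ((((n ⊔ qq) - qq)) i : ℕ∞) ≤ z₀.deg i := by
          intro i
          rw [hsh2.2.1 i]
          have hsplit : ((n ⊔ qq) i : ℕ) = qq i + ((n ⊔ qq) - qq) i := by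
            simp only [Pi.sub_apply, Pi.sup_apply]; omega
          rw [KGraph.enat_coe_le_sub (hsh2.1 i), ← hsplit]
          exact hnqval i
        have hqm : qq + ((n ⊔ qq) - qq) = n ⊔ qq := by
          funext i
          simp only [Pi.add_apply, Pi.sub_apply, Pi.sup_apply]; omega
        have h2 := hsh2.2.2 ((n ⊔ qq) - qq) ((n ⊔ qq) - qq) le_rfl hmval
        have h1 := hsh1.2.2 ((n ⊔ qq) - qq) ((n ⊔ qq) - qq) le_rfl hmval
        rw [hqm] at h2
        show Λ.src (y₂.seg (n ⊔ qq) (n ⊔ qq)) = Λ.src (y₁.seg (pp + ((n ⊔ qq) - qq))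
          (pp + ((n ⊔ qq) - qq)))
        rw [← h2, h1]
    rcases hmin V hVsub hVopen hVinv with hVe | hVu
    · -- impossible: V contains the unit of a boundary path at v
      exfalso
      obtain ⟨y, hy⟩ := KGraph.exists_boundaryPath (Λ := Λ) v
      have : Λ.unitOf y ∈ V := by
        refine ⟨KGraph.unitOf_mem_unitSet y, 0, by intro i; simp, Λ.vertex v,
          Λ.rng_vertex v, ?_⟩
        rw [Λ.src_vertex, ← hy]
        rfl
      rw [hVe] at this
      exact this
    · have hx : Λ.unitOf x ∈ V := by
        rw [hVu]; exact KGraph.unitOf_mem_unitSet x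
      obtain ⟨-, n, hn, p, hpv, hps⟩ := hx
      exact ⟨n, hn, p, hpv, hps⟩
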